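/- arXiv:0910.2721 — 4 statements merged into one kernel-verified Lean document; each statement's English description precedes it below -/
import Mathlib

section
/- Let ρ > 4, C > 0, and let f : ℝ³ → ℝ be measurable with |f(x)| ≤ C (1+|x|)^{-ρ} for all x. Define u := G * f, i.e. u(x) = ∫_{ℝ³} G(x−y) f(y) dy. Then lim_{|x|→∞} |x|⁴ u(x) = π^{-2} ∫_{ℝ³} f(y) dy. -/
open MeasureTheory Filter

noncomputable section

/-- `ℝ³` with the Euclidean norm. -/
abbrev E3 : Type := EuclideanSpace ℝ (Fin 3)

/-- The integral kernel `G` of the resolvent `(√(-Δ)+1)⁻¹` on `ℝ³`: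
`G(x) = π⁻² ∫₀^∞ e^{-t} t (t² + |x|²)⁻² dt`. -/
def G (x : E3) : ℝ :=
  (Real.pi)^(-2 : ℤ) * ∫ t in Set.Ioi (0:ℝ), Real.exp (-t) * t / (t^2 + ‖x‖^2)^2

instance : (cocompact E3).IsCountablyGenerated := by
  rw [← Metric.cobounded_eq_cocompact, ← comap_norm_atTop]
  infer_instance

def tint (r : ℝ) : ℝ := ∫ t in Set.Ioi (0:ℝ), Real.exp (-t) * t / (t^2 + r^2)^2

lemma G_eq (x : E3) : G x = (Real.pi)^(-2 : ℤ) * tint ‖x‖ := rfl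

lemma pi2_pos : (0:ℝ) < (Real.pi)^(-2 : ℤ) := by
  have := Real.pi_pos; positivity

lemma hT1 : IntegrableOn (fun t : ℝ => Real.exp (-t) * t) (Set.Ioi 0) := by
  have := Real.GammaIntegral_convergent (s := 2) (by norm_num)
  norm_num [Real.rpow_one] at this; exact this

lemma hT1val : ∫ t in Set.Ioi (0:ℝ), Real.exp (-t) * t = 1 := by
  have h := Real.Gamma_eq_integral (s := 2) (by norm_num)
  have h2 : Real.Gamma 2 = 1 := by simpa using Real.Gamma_nat_eq_factorial 1
  rw [h2] at h; norm_num [Real.rpow_one] at h; exact h.symm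

lemma hT2 : IntegrableOn (fun t : ℝ => Real.exp (-t) * t ^ (-(1/2):ℝ)) (Set.Ioi 0) := by
  have := Real.GammaIntegral_convergent (s := 1/2) (by norm_num)
  norm_num at this; exact this

lemma tint_cont {r : ℝ} (hr : 0 < r) :
    Continuous (fun t : ℝ => Real.exp (-t) * t / (t^2 + r^2)^2) := by
  apply Continuous.div (by fun_prop) (by fun_prop)
  intro t; positivity

lemma tint_integrableOn {r : ℝ} (hr : 0 < r) :
    IntegrableOn (fun t : ℝ => Real.exp (-t) * t / (t^2 + r^2)^2) (Set.Ioi 0) := by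
  refine (hT1.mul_const ((r^2)^2)⁻¹).mono' ((tint_cont hr).aestronglyMeasurable.restrict) ?_
  refine (ae_restrict_iff' measurableSet_Ioi).2 (ae_of_all _ fun t ht => ?_)
  have ht' : (0:ℝ) < t := ht
  have h1 : (0:ℝ) < (t^2 + r^2)^2 := by positivity
  rw [Real.norm_eq_abs, abs_of_nonneg (by positivity)]
  rw [div_eq_mul_inv]
  apply mul_le_mul_of_nonneg_left _ (by positivity)
  apply inv_anti₀ (by positivity)
  nlinarith [sq_nonneg t, sq_nonneg r]

lemma tint_nonneg (r : ℝ) : 0 ≤ tint r := by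
  apply setIntegral_nonneg measurableSet_Ioi
  intro t ht; have : (0:ℝ) < t := ht; positivity

lemma G_nonneg (x : E3) : 0 ≤ G x := mul_nonneg pi2_pos.le (tint_nonneg _)

lemma tint_le_pow4 {r : ℝ} (hr : 0 < r) : tint r ≤ (r^4)⁻¹ := by
  have key : tint r ≤ ∫ t in Set.Ioi (0:ℝ), Real.exp (-t) * t * (r^4)⁻¹ := by
    apply setIntegral_mono_on (tint_integrableOn hr) (hT1.mul_const _) measurableSet_Ioi
    intro t ht
    have ht' : (0:ℝ) < t := ht
    rw [div_le_iff₀ (by positivity)]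
    have h4 : r^4 ≤ (t^2+r^2)^2 := by nlinarith [sq_nonneg t, sq_nonneg (t^2+r^2)]
    have := Real.exp_pos (-t)
    calc Real.exp (-t) * t = Real.exp (-t) * t * (r^4)⁻¹ * r^4 := by field_simp
    _ ≤ Real.exp (-t) * t * (r^4)⁻¹ * (t^2+r^2)^2 := by
        apply mul_le_mul_of_nonneg_left h4; positivity
  rw [integral_mul_const, hT1val, one_mul] at key
  exact key

lemma sqrt_bound {a t : ℝ} (ha : 0 < a) (ht : 0 < t) :
    2 * Real.sqrt 2 * (t * Real.sqrt t) * (a^2 * Real.sqrt a) ≤ (t^2 + a^2)^2 := by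
  have h1 : Real.sqrt 2 ^ 2 = 2 := Real.sq_sqrt (by norm_num)
  have h2 : Real.sqrt t ^ 2 = t := Real.sq_sqrt ht.le
  have h3 : Real.sqrt a ^ 2 = a := Real.sq_sqrt ha.le
  have h2t : 2 * t * a ≤ t^2 + a^2 := by nlinarith [sq_nonneg (t - a)]
  have hA : (2 * Real.sqrt 2 * (t * Real.sqrt t) * (a^2 * Real.sqrt a))^2 = 8 * t^3 * a^5 := by
    have : (2 * Real.sqrt 2 * (t * Real.sqrt t) * (a^2 * Real.sqrt a))^2
        = 2^2 * Real.sqrt 2 ^2 * (t^2 * Real.sqrt t ^2) * ((a^2)^2 * Real.sqrt a ^2) := by ring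
    rw [this, h1, h2, h3]; ring
  have h4 : (2*t*a)^3 * a^2 ≤ (t^2+a^2)^3 * (t^2+a^2) := by
    apply mul_le_mul (pow_le_pow_left₀ (by positivity) h2t 3) (by nlinarith [sq_nonneg t])
      (sq_nonneg a) (by positivity)
  have h5 : (2 * Real.sqrt 2 * (t * Real.sqrt t) * (a^2 * Real.sqrt a))^2 ≤ ((t^2+a^2)^2)^2 := by
    rw [hA]; nlinarith [h4]
  exact (pow_le_pow_iff_left₀ (by positivity) (by positivity) (by norm_num)).1 h5

lemma measurable_G : Measurable G := by
  have h1 : Measurable (fun p : E3 × ℝ => Real.exp (-p.2) * p.2 / (p.2^2 + ‖p.1‖^2)^2) := by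
    fun_prop
  have h2 := h1.stronglyMeasurable.integral_prod_right' (ν := volume.restrict (Set.Ioi 0))
  exact measurable_const.mul h2.measurable

def c5 : ℝ := (∫ t in Set.Ioi (0:ℝ), Real.exp (-t) * t ^ (-(1/2):ℝ)) * (2 * Real.sqrt 2)⁻¹

lemma c5_nonneg : 0 ≤ c5 := by
  apply mul_nonneg _ (by positivity)
  apply setIntegral_nonneg measurableSet_Ioi
  intro t ht; have : (0:ℝ) < t := ht; positivity

lemma tint_le_sqrt {a r : ℝ} (ha : 0 < a) (har : a ≤ r) :
    tint r ≤ c5 * (a^2 * Real.sqrt a)⁻¹ := by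
  have hr : 0 < r := ha.trans_le har
  have key : tint r ≤ ∫ t in Set.Ioi (0:ℝ),
      Real.exp (-t) * t ^ (-(1/2):ℝ) * ((2 * Real.sqrt 2)⁻¹ * (a^2 * Real.sqrt a)⁻¹) := by
    apply setIntegral_mono_on (tint_integrableOn hr) (hT2.mul_const _) measurableSet_Ioi
    intro t ht
    have ht' : (0:ℝ) < t := ht
    have hst : (0:ℝ) < Real.sqrt t := Real.sqrt_pos.2 ht'
    have hsa : (0:ℝ) < Real.sqrt a := Real.sqrt_pos.2 ha
    have hs2 : (0:ℝ) < Real.sqrt 2 := by positivity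
    have hrp : t ^ (-(1/2):ℝ) = (Real.sqrt t)⁻¹ := by
      rw [Real.rpow_neg ht'.le, ← Real.sqrt_eq_rpow]
    rw [hrp, div_le_iff₀ (by positivity)]
    have hmono : 2 * Real.sqrt 2 * (t * Real.sqrt t) * (a^2 * Real.sqrt a) ≤ (t^2 + r^2)^2 := by
      refine (sqrt_bound ha ht').trans ?_
      have h' : t^2 + a^2 ≤ t^2 + r^2 := by nlinarith
      exact pow_le_pow_left₀ (by positivity) h' 2
    calc Real.exp (-t) * t
        = Real.exp (-t) * (Real.sqrt t)⁻¹ * ((2*Real.sqrt 2)⁻¹ * (a^2*Real.sqrt a)⁻¹)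
          * (2 * Real.sqrt 2 * (t * Real.sqrt t) * (a^2 * Real.sqrt a)) := by
          field_simp
      _ ≤ _ := by
          apply mul_le_mul_of_nonneg_left hmono (by positivity)
  rw [integral_mul_const] at key
  refine key.trans (le_of_eq ?_)
  rw [c5]; ring

lemma G_le_pow4 {z : E3} (hz : z ≠ 0) : G z ≤ (Real.pi)^(-2:ℤ) * (‖z‖^4)⁻¹ := by
  rw [G_eq]
  exact mul_le_mul_of_nonneg_left (tint_le_pow4 (norm_pos_iff.2 hz)) pi2_pos.le

lemma G_le_sqrt {z : E3} {a : ℝ} (ha : 0 < a) (haz : a ≤ ‖z‖) :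
    G z ≤ (Real.pi)^(-2:ℤ) * (c5 * (a^2 * Real.sqrt a)⁻¹) := by
  rw [G_eq]
  exact mul_le_mul_of_nonneg_left (tint_le_sqrt ha haz) pi2_pos.le

lemma key_bound {x y : E3} (hx : 0 < ‖x‖) (h : ‖x‖/2 ≤ ‖x - y‖) :
    ‖x‖^4 * G (x - y) ≤ 16 * (Real.pi)^(-2:ℤ) := by
  have hz : x - y ≠ 0 := by
    intro h0; rw [h0] at h; simp at h; linarith
  have h1 := G_le_pow4 hz
  have h2 : (‖x‖/2)^4 ≤ ‖x-y‖^4 := pow_le_pow_left₀ (by positivity) h 4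
  calc ‖x‖^4 * G (x-y) ≤ ‖x‖^4 * ((Real.pi)^(-2:ℤ) * (‖x-y‖^4)⁻¹) :=
        mul_le_mul_of_nonneg_left h1 (by positivity)
    _ ≤ ‖x‖^4 * ((Real.pi)^(-2:ℤ) * ((‖x‖/2)^4)⁻¹) := by
        refine mul_le_mul_of_nonneg_left
          (mul_le_mul_of_nonneg_left (inv_anti₀ (by positivity) h2) pi2_pos.le) (by positivity)
    _ = 16 * (Real.pi)^(-2:ℤ) := by field_simp; ring


lemma integrable_G : Integrable (G : E3 → ℝ) := by
  rw [← integrableOn_univ, ← Set.union_compl_self (Metric.closedBall (0:E3) 1)]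
  apply IntegrableOn.union
  · -- inner part
    set q : ℝ := (Real.sqrt 2)⁻¹ with hq
    have hq0 : 0 < q := by positivity
    have hs2 : (1:ℝ) < Real.sqrt 2 := by
      rw [show (1:ℝ) = Real.sqrt 1 by simp]
      exact Real.sqrt_lt_sqrt (by norm_num) (by norm_num)
    have hq1 : q < 1 := by
      rw [hq]
      exact inv_lt_one_of_one_lt₀ hs2
    have hqsq : q^2 = 2⁻¹ := by
      rw [hq, ← one_div, div_pow, one_pow, Real.sq_sqrt (by norm_num : (0:ℝ) ≤ 2), one_div]
    set s : ℕ → Set E3 := fun n =>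
      Metric.closedBall 0 (q^(2*n)) \ Metric.ball 0 (q^(2*n+2)) with hs
    have hmeasn : ∀ n, MeasurableSet (s n) := fun n =>
      measurableSet_closedBall.diff measurableSet_ball
    set M : ℕ → ℝ := fun n => (Real.pi)^(-2:ℤ) * (c5 * (q^(5*n+5))⁻¹) with hM
    have hsqrtq : ∀ n : ℕ, Real.sqrt (q^(2*n+2)) = q^(n+1) := by
      intro n
      rw [show q^(2*n+2) = (q^(n+1))^2 by ring]
      exact Real.sqrt_sq (by positivity)
    have hGbd : ∀ n, ∀ z ∈ s n, ‖G z‖ ≤ M n := by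
      intro n z hzm
      have hz2 : q^(2*n+2) ≤ ‖z‖ := by
        have := hzm.2
        simp only [Metric.mem_ball, dist_zero_right, not_lt] at this
        exact this
      have hb := G_le_sqrt (a := q^(2*n+2)) (by positivity) hz2
      rw [Real.norm_eq_abs, abs_of_nonneg (G_nonneg z)]
      refine hb.trans (le_of_eq ?_)
      rw [hM]
      congr 2
      rw [hsqrtq n, ← pow_mul, ← pow_add]
      congr 1
      ring
    have hintn : ∀ n, IntegrableOn G (s n) := by
      intro n
      apply Measure.integrableOn_of_bounded (M := M n)
      · exact ((measure_mono Set.diff_subset).trans_lt measure_closedBall_lt_top).ne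
      · exact measurable_G.aestronglyMeasurable
      · exact (ae_restrict_iff' (hmeasn n)).2 (ae_of_all _ (hGbd n))
    have vol_cb : ∀ n : ℕ, (volume (Metric.closedBall (0:E3) (q^(2*n)))).toReal
        = (q^(2*n))^3 * (volume (Metric.ball (0:E3) 1)).toReal := by
      intro n
      rw [Measure.addHaar_closedBall _ 0 (by positivity)]
      simp only [finrank_euclideanSpace, Fintype.card_fin]
      rw [ENNReal.toReal_mul, ENNReal.toReal_ofReal (by positivity)]
    set vb : ℝ := (volume (Metric.ball (0:E3) 1)).toReal with hvb
    have hsum : Summable fun n => ∫ z in s n, ‖G z‖ := by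
      have hgeo : Summable (fun n : ℕ =>
          ((Real.pi)^(-2:ℤ) * c5 * (q^5)⁻¹ * vb) * q^n) :=
        (summable_geometric_of_lt_one hq0.le hq1).mul_left _
      apply Summable.of_nonneg_of_le
        (fun n => setIntegral_nonneg (hmeasn n) (fun z _ => norm_nonneg (G z)))
        (fun n => ?_) hgeo
      have hfin : volume (s n) < ⊤ :=
        (measure_mono Set.diff_subset).trans_lt measure_closedBall_lt_top
      have h1 : ∫ z in s n, ‖G z‖ ≤ M n * (volume (s n)).toReal := by
        have h2 := norm_setIntegral_le_of_norm_le_const hfin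
          (f := fun z => ‖G z‖) (C := M n)
          (fun z hzz => by rw [norm_norm]; exact hGbd n z hzz)
        exact (le_abs_self _).trans h2
      refine h1.trans ?_
      have h2 : (volume (s n)).toReal ≤ (q^(2*n))^3 * vb := by
        rw [hvb, ← vol_cb n]
        exact ENNReal.toReal_mono measure_closedBall_lt_top.ne (measure_mono Set.diff_subset)
      have hMn : 0 ≤ M n := by
        simp only [hM]
        exact mul_nonneg pi2_pos.le (mul_nonneg c5_nonneg (by positivity))
      refine (mul_le_mul_of_nonneg_left h2 hMn).trans (le_of_eq ?_)
      have hpow : (q^(5*n+5))⁻¹ * (q^(2*n))^3 = (q^5)⁻¹ * q^n := by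
        rw [← pow_mul]
        field_simp
        rw [← pow_add, ← pow_add]
        congr 1
        ring
      calc M n * ((q^(2*n))^3 * vb)
          = (Real.pi)^(-2:ℤ) * c5 * ((q^(5*n+5))⁻¹ * (q^(2*n))^3) * vb := by rw [hM]; ring
        _ = (Real.pi)^(-2:ℤ) * c5 * (q^5)⁻¹ * vb * q^n := by rw [hpow]; ring
    have hUnion : IntegrableOn G (⋃ n, s n) :=
      integrableOn_iUnion_of_summable_integral_norm hintn hsum
    have hsub : Metric.closedBall (0:E3) 1 \ {0} ⊆ ⋃ n, s n := by
      intro z hzm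
      obtain ⟨hz1, hz0⟩ := hzm
      have hz0' : z ≠ 0 := hz0
      have hzpos : 0 < ‖z‖ := norm_pos_iff.2 hz0'
      have hz1' : ‖z‖ ≤ 1 := by
        simpa [Metric.mem_closedBall, dist_zero_right] using hz1
      have hq2 : q^2 < 1 := by rw [hqsq]; norm_num
      have hex : ∃ k : ℕ, (q^2)^k < ‖z‖ :=
        exists_pow_lt_of_lt_one hzpos hq2
      classical
      set k0 := Nat.find hex with hk0
      have hspec : (q^2)^k0 < ‖z‖ := Nat.find_spec hex
      have hk0ne : k0 ≠ 0 := by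
        intro h0
        rw [h0] at hspec
        simp at hspec
        linarith
      obtain ⟨m, hm⟩ : ∃ m, k0 = m + 1 := ⟨k0 - 1, (Nat.succ_pred_eq_of_pos (Nat.pos_of_ne_zero hk0ne)).symm⟩
      have hmin : ¬ (q^2)^m < ‖z‖ := Nat.find_min hex (by omega)
      push_neg at hmin
      refine Set.mem_iUnion.2 ⟨m, ?_, ?_⟩
      · rw [Metric.mem_closedBall, dist_zero_right, pow_mul]
        exact hmin
      · rw [Metric.mem_ball, dist_zero_right, not_lt, show 2*m+2 = 2*(m+1) by ring, pow_mul, ← hm]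
        exact hspec.le
    have hdiff : IntegrableOn G (Metric.closedBall (0:E3) 1 \ {0}) := hUnion.mono_set hsub
    have h0 : (Metric.closedBall (0:E3) 1 \ ({0} : Set E3)) =ᵐ[volume]
        (Metric.closedBall (0:E3) 1 : Set E3) := by
      apply MeasureTheory.diff_ae_eq_self.2
      exact measure_mono_null Set.inter_subset_right (measure_singleton 0)
    exact hdiff.congr_set_ae h0.symm
  · -- outer part
    have hb : Integrable (fun z : E3 => (16 * (Real.pi)^(-2:ℤ)) * (1+‖z‖)^(-4:ℝ)) := by
      apply Integrable.const_mul
      apply integrable_one_add_norm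
      simp only [finrank_euclideanSpace, Fintype.card_fin]
      norm_num
    refine (hb.integrableOn).mono' measurable_G.aestronglyMeasurable.restrict ?_
    refine (ae_restrict_iff' (measurableSet_closedBall.compl)).2 (ae_of_all _ fun z hz => ?_)
    simp only [Set.mem_compl_iff, Metric.mem_closedBall, dist_zero_right, not_le] at hz
    have hzpos : 0 < ‖z‖ := by linarith
    have hz0 : z ≠ 0 := norm_pos_iff.1 hzpos
    have h1 : G z ≤ (Real.pi)^(-2:ℤ) * (‖z‖^4)⁻¹ := G_le_pow4 hz0
    have h2 : (1+‖z‖)^(-4:ℝ) = ((1+‖z‖)^(4:ℕ))⁻¹ := by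
      rw [← Real.rpow_natCast (1+‖z‖) 4, ← Real.rpow_neg (by positivity)]
      norm_num
    rw [Real.norm_eq_abs, abs_of_nonneg (G_nonneg z), h2]
    have h3 : (1+‖z‖)^(4:ℕ) ≤ 16 * ‖z‖^4 := by
      have hle : 1 + ‖z‖ ≤ 2 * ‖z‖ := by linarith
      calc (1+‖z‖)^(4:ℕ) ≤ (2*‖z‖)^(4:ℕ) := pow_le_pow_left₀ (by positivity) hle 4
        _ = 16 * ‖z‖^4 := by ring
    have h4 : (‖z‖^4)⁻¹ ≤ 16 * ((1+‖z‖)^(4:ℕ))⁻¹ := by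
      rw [show (‖z‖^4)⁻¹ = 16/(16*‖z‖^4) by field_simp,
        show (16:ℝ) * ((1+‖z‖)^(4:ℕ))⁻¹ = 16/((1+‖z‖)^(4:ℕ)) by ring]
      apply div_le_div_of_nonneg_left (by norm_num) (by positivity) h3
    calc G z ≤ (Real.pi)^(-2:ℤ) * (‖z‖^4)⁻¹ := h1
      _ ≤ (Real.pi)^(-2:ℤ) * (16 * ((1+‖z‖)^(4:ℕ))⁻¹) :=
          mul_le_mul_of_nonneg_left h4 pi2_pos.le
      _ = 16 * (Real.pi)^(-2:ℤ) * ((1+‖z‖)^(4:ℕ))⁻¹ := by ring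

lemma aux_ratio (t c : ℝ) (ht : 0 < t) :
    Tendsto (fun r : ℝ => r^4 / (t^2 + (r+c)^2)^2) atTop (nhds 1) := by
  have h0 : Tendsto (fun r : ℝ => r⁻¹) atTop (nhds 0) := tendsto_inv_atTop_zero
  have hbase : Tendsto (fun r : ℝ => t^2 * (r⁻¹ * r⁻¹) + (1 + c * r⁻¹)^2) atTop
      (nhds (t^2 * (0 * 0) + (1 + c * 0)^2)) :=
    ((h0.mul h0).const_mul (t^2)).add ((tendsto_const_nhds.add (h0.const_mul c)).pow 2)
  have hbase' : Tendsto (fun r : ℝ => t^2 * (r⁻¹ * r⁻¹) + (1 + c * r⁻¹)^2) atTop (nhds 1) := by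
    convert hbase using 2
    norm_num
  have hinv : Tendsto (fun r : ℝ => (((t^2 * (r⁻¹ * r⁻¹) + (1 + c * r⁻¹)^2))^2)⁻¹) atTop
      (nhds 1) := by
    have := (hbase'.pow 2).inv₀ (by norm_num)
    simpa using this
  apply hinv.congr'
  filter_upwards [eventually_gt_atTop 0] with r hr
  have hD : (0:ℝ) < t^2 + (r+c)^2 := by positivity
  field_simp

lemma ratio_tendsto (y : E3) {t : ℝ} (ht : 0 < t) :
    Tendsto (fun x : E3 => ‖x‖^4 / (t^2 + ‖x - y‖^2)^2) (cocompact E3) (nhds 1) := by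
  have hnorm : Tendsto (fun x : E3 => ‖x‖) (cocompact E3) atTop :=
    tendsto_norm_cocompact_atTop
  have hlow := (aux_ratio t ‖y‖ ht).comp hnorm
  have hup := (aux_ratio t (-‖y‖) ht).comp hnorm
  refine tendsto_of_tendsto_of_tendsto_of_le_of_le hlow hup ?_ ?_
  · intro x
    simp only [Function.comp_apply]
    apply div_le_div_of_nonneg_left (by positivity) (by positivity)
    apply pow_le_pow_left₀ (by positivity)
    nlinarith [norm_sub_le x y, norm_nonneg x, norm_nonneg y, norm_nonneg (x - y)]
  · intro x
    simp only [Function.comp_apply]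
    apply div_le_div_of_nonneg_left (by positivity) (by positivity)
    apply pow_le_pow_left₀ (by positivity)
    have h1 : |‖x‖ - ‖y‖| ≤ ‖x - y‖ := abs_norm_sub_norm_le x y
    nlinarith [abs_nonneg (‖x‖ - ‖y‖), sq_abs (‖x‖ - ‖y‖), norm_nonneg (x - y)]

lemma ker_tendsto (y : E3) :
    Tendsto (fun x : E3 => ‖x‖^4 * G (x - y)) (cocompact E3)
      (nhds ((Real.pi)^(-2:ℤ))) := by
  have heq : ∀ x : E3, ‖x‖^4 * G (x - y)
      = (Real.pi)^(-2:ℤ) *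
        ∫ t in Set.Ioi (0:ℝ), ‖x‖^4 * (Real.exp (-t) * t / (t^2 + ‖x-y‖^2)^2) := by
    intro x
    rw [integral_const_mul, G_eq]
    simp only [tint]
    ring
  have htend : Tendsto
      (fun x : E3 => ∫ t in Set.Ioi (0:ℝ), ‖x‖^4 * (Real.exp (-t) * t / (t^2 + ‖x-y‖^2)^2))
      (cocompact E3) (nhds 1) := by
    rw [← hT1val]
    apply tendsto_integral_filter_of_dominated_convergence
      (bound := fun t => 16 * (Real.exp (-t) * t))
    · apply Eventually.of_forall
      intro x
      apply ContinuousOn.aestronglyMeasurable _ measurableSet_Ioi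
      apply ContinuousOn.mul continuousOn_const
      apply ContinuousOn.div (by fun_prop) (by fun_prop)
      intro s hs
      have : (0:ℝ) < s := hs
      positivity
    · have hev : ∀ᶠ x : E3 in cocompact E3, 2*‖y‖+2 ≤ ‖x‖ :=
        tendsto_norm_cocompact_atTop.eventually_ge_atTop _
      filter_upwards [hev] with x hx
      refine (ae_restrict_iff' measurableSet_Ioi).2 (ae_of_all _ fun t ht => ?_)
      have ht' : (0:ℝ) < t := ht
      have hy0 : (0:ℝ) ≤ ‖y‖ := norm_nonneg y
      have hx0 : (0:ℝ) < ‖x‖ := by linarith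
      have hxy : ‖x‖/2 ≤ ‖x - y‖ := by
        have := norm_sub_norm_le x y
        linarith
      have hxy0 : (0:ℝ) < ‖x - y‖ := by linarith
      have hD : (‖x‖/2)^4 ≤ (t^2 + ‖x-y‖^2)^2 := by
        have h1 : (‖x‖/2)^4 ≤ ‖x-y‖^4 := pow_le_pow_left₀ (by positivity) hxy 4
        have h2 : ‖x-y‖^4 ≤ (t^2 + ‖x-y‖^2)^2 := by nlinarith [sq_nonneg t, sq_nonneg (‖x-y‖^2)]
        linarith
      rw [Real.norm_eq_abs, abs_of_nonneg (by positivity)]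
      calc ‖x‖^4 * (Real.exp (-t) * t / (t^2 + ‖x-y‖^2)^2)
          ≤ ‖x‖^4 * (Real.exp (-t) * t / ((‖x‖/2)^4)) := by
            gcongr
        _ = 16 * (Real.exp (-t) * t) := by field_simp; ring
    · exact hT1.const_mul 16
    · refine (ae_restrict_iff' measurableSet_Ioi).2 (ae_of_all _ fun t ht => ?_)
      have ht' : (0:ℝ) < t := ht
      have h2 := (ratio_tendsto y ht').const_mul (Real.exp (-t) * t)
      rw [mul_one] at h2
      exact h2.congr (fun x => by ring)
  have := htend.const_mul ((Real.pi)^(-2:ℤ))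
  rw [mul_one] at this
  exact this.congr (fun x => (heq x).symm)

/-- Lemma 3.3 (i).  If `|f(x)| ≤ C (1+|x|)^{-ρ}` with `ρ > 4` and
`u = G ∗ f`, then `|x|⁴ u(x) → π⁻² ∫ f` as `|x| → ∞`. -/
theorem asymptotics_of_resolvent_convolution
    (ρ C : ℝ) (hρ : 4 < ρ) (hC : 0 < C)
    (f : E3 → ℝ) (hmeas : Measurable f)
    (hdecay : ∀ x : E3, |f x| ≤ C * (1 + ‖x‖) ^ (-ρ))
    (u : E3 → ℝ) (hu : ∀ x : E3, u x = ∫ y : E3, G (x - y) * f y) :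
    Tendsto (fun x : E3 => ‖x‖^4 * u x) (cocompact E3)
      (nhds ((Real.pi)^(-2 : ℤ) * ∫ y : E3, f y)) := by
  have hπ2pos : (0:ℝ) < (Real.pi)^(-2:ℤ) := pi2_pos
  set π2 : ℝ := (Real.pi)^(-2:ℤ) with hπ2def
  have hnorm : Tendsto (fun x : E3 => ‖x‖) (cocompact E3) atTop :=
    tendsto_norm_cocompact_atTop
  have hρ0 : (0:ℝ) < ρ := by linarith
  -- boundedness of f
  have hfC : ∀ y : E3, |f y| ≤ C := by
    intro y
    refine (hdecay y).trans ?_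
    have h1 : (1+‖y‖) ^ (-ρ) ≤ 1 :=
      Real.rpow_le_one_of_one_le_of_nonpos (by linarith [norm_nonneg y]) (by linarith)
    nlinarith
  -- integrability of f
  have hfint : Integrable f := by
    have hout : Integrable (fun y : E3 => C * (1+‖y‖)^(-ρ)) := by
      apply Integrable.const_mul
      apply integrable_one_add_norm
      have h3 : (3:ℝ) < ρ := by linarith
      simp only [finrank_euclideanSpace, Fintype.card_fin]
      exact_mod_cast h3
    exact hout.mono' hmeas.aestronglyMeasurable
      (ae_of_all _ fun y => by rw [Real.norm_eq_abs]; exact hdecay y)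
  have hGx : ∀ x : E3, Integrable (fun y : E3 => G (x - y)) := fun x =>
    integrable_G.comp_sub_left x
  have hmG : ∀ x : E3, Measurable (fun y : E3 => G (x - y)) := fun x =>
    measurable_G.comp (measurable_const.sub measurable_id)
  have hint1 : ∀ x : E3, Integrable (fun y => G (x - y) * f y) := by
    intro x
    apply Integrable.mono' ((hGx x).const_mul C) ((hmG x).mul hmeas).aestronglyMeasurable
    apply ae_of_all
    intro y
    rw [Pi.mul_apply, norm_mul, Real.norm_eq_abs, Real.norm_eq_abs, abs_of_nonneg (G_nonneg _), mul_comm]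
    exact mul_le_mul_of_nonneg_right (hfC y) (G_nonneg _)
  have hint2 : ∀ x : E3, Integrable (fun y => (‖x‖^4 * G (x - y) - π2) * f y) := by
    intro x
    have h1 : (fun y => (‖x‖^4 * G (x - y) - π2) * f y)
        = fun y => ‖x‖^4 * (G (x - y) * f y) - π2 * f y := by funext y; ring
    rw [h1]
    exact ((hint1 x).const_mul _).sub (hfint.const_mul _)
  have hkey : ∀ x : E3, ‖x‖^4 * u x - π2 * (∫ y, f y)
      = ∫ y, (‖x‖^4 * G (x - y) - π2) * f y := by
    intro x
    have h1 : (fun y => (‖x‖^4 * G (x - y) - π2) * f y)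
        = fun y => ‖x‖^4 * (G (x - y) * f y) - π2 * f y := by funext y; ring
    rw [h1, integral_sub ((hint1 x).const_mul _) (hfint.const_mul _),
      integral_const_mul, integral_const_mul, hu x]
  suffices hmain : Tendsto (fun x : E3 => ∫ y, (‖x‖^4 * G (x - y) - π2) * f y)
      (cocompact E3) (nhds 0) by
    have h2 := hmain.add_const (π2 * ∫ y, f y)
    rw [zero_add] at h2
    refine h2.congr (fun x => ?_)
    rw [← hkey x]; ring
  rw [NormedAddCommGroup.tendsto_nhds_zero]
  intro ε hε
  set δ : ℝ := ε / (4*(17*π2+1)) with hδdef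
  have hδpos : 0 < δ := by positivity
  -- tail choice
  have htail : Tendsto (fun n : ℕ => ∫ y in (Metric.closedBall (0:E3) n)ᶜ, |f y|) atTop
      (nhds 0) := by
    have hmono : Monotone (fun n : ℕ => Metric.closedBall (0:E3) n) := by
      intro a b hab
      exact Metric.closedBall_subset_closedBall (by exact_mod_cast hab)
    have hU : (⋃ n : ℕ, Metric.closedBall (0:E3) n) = Set.univ :=
      Metric.iUnion_closedBall_nat 0
    have h1 : Tendsto (fun n : ℕ => ∫ y in Metric.closedBall (0:E3) n, |f y|) atTop
        (nhds (∫ y, |f y|)) := by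
      have := tendsto_setIntegral_of_monotone (f := fun y : E3 => |f y|) (μ := volume)
        (fun n : ℕ => measurableSet_closedBall) hmono
        (by rw [hU, integrableOn_univ]; exact hfint.abs)
      rwa [hU, setIntegral_univ] at this
    have h2 : ∀ n : ℕ, ∫ y in (Metric.closedBall (0:E3) n)ᶜ, |f y|
        = (∫ y, |f y|) - ∫ y in Metric.closedBall (0:E3) n, |f y| := by
      intro n
      rw [← integral_add_compl (measurableSet_closedBall) hfint.abs]
      ring
    simp_rw [h2]
    have := (tendsto_const_nhds (x := ∫ y, |f y|) (f := atTop (α := ℕ))).sub h1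
    simpa using this
  obtain ⟨N, hN⟩ : ∃ N : ℕ, ∫ y in (Metric.closedBall (0:E3) N)ᶜ, |f y| < δ := by
    exact (htail.eventually (eventually_lt_nhds hδpos)).exists
  set B : Set E3 := Metric.closedBall (0:E3) N with hBdef
  -- Part 1 : DCT on B
  have hA : Tendsto (fun x : E3 => ∫ y in B, (‖x‖^4 * G (x - y) - π2) * f y)
      (cocompact E3) (nhds 0) := by
    have h0 : (nhds (0:ℝ)) = nhds (∫ y in B, (0:ℝ)) := by simp
    rw [h0]
    apply tendsto_integral_filter_of_dominated_convergence
      (bound := fun y => 17 * π2 * |f y|)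
    · apply Eventually.of_forall
      intro x
      apply AEStronglyMeasurable.restrict
      apply Measurable.aestronglyMeasurable
      exact (((hmG x).const_mul _).sub measurable_const).mul hmeas
    · have hev : ∀ᶠ x : E3 in cocompact E3, 2*((N:ℝ)+1) ≤ ‖x‖ :=
        hnorm.eventually_ge_atTop _
      filter_upwards [hev] with x hx
      refine (ae_restrict_iff' measurableSet_closedBall).2 (ae_of_all _ fun y hy => ?_)
      have hyN : ‖y‖ ≤ N := by
        simpa [Metric.mem_closedBall, dist_zero_right] using hy
      have hN0 : (0:ℝ) ≤ N := Nat.cast_nonneg N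
      have hx0 : (0:ℝ) < ‖x‖ := by linarith
      have hxy : ‖x‖/2 ≤ ‖x - y‖ := by
        have := norm_sub_norm_le x y
        linarith
      have hkb := key_bound hx0 hxy
      rw [norm_mul, Real.norm_eq_abs, Real.norm_eq_abs]
      have habs : |‖x‖^4 * G (x - y) - π2| ≤ 17 * π2 := by
        rw [abs_le]
        constructor
        · have := mul_nonneg (pow_nonneg (norm_nonneg x) 4) (G_nonneg (x - y))
          linarith
        · linarith
      calc |‖x‖^4 * G (x - y) - π2| * |f y| ≤ (17*π2) * |f y| :=
            mul_le_mul_of_nonneg_right habs (abs_nonneg _)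
        _ = 17 * π2 * |f y| := by ring
    · exact ((hfint.abs.const_mul _)).integrableOn
    · refine ae_of_all _ fun y => ?_
      have h3 := ((ker_tendsto y).sub_const π2).mul_const (f y)
      rw [← hπ2def, sub_self, zero_mul] at h3
      exact h3
  -- constant Gn
  set Gn : ℝ := ∫ z : E3, G z with hGndef
  have hGn0 : 0 ≤ Gn := integral_nonneg G_nonneg
  -- decay factor
  set cx : E3 → ℝ := fun x => C * (1+‖x‖/2)^(-ρ) * ‖x‖^4 with hcxdef
  have hcx0 : ∀ x, 0 ≤ cx x := by
    intro x
    have : (0:ℝ) < 1 + ‖x‖/2 := by positivity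
    positivity
  have hcx : Tendsto (fun x : E3 => cx x * Gn) (cocompact E3) (nhds 0) := by
    apply squeeze_zero' (Eventually.of_forall fun x => mul_nonneg (hcx0 x) hGn0)
      (g := fun x : E3 => (C * 2^ρ * Gn) * ‖x‖ ^ (4-ρ))
    · have hev : ∀ᶠ x : E3 in cocompact E3, 1 ≤ ‖x‖ := hnorm.eventually_ge_atTop _
      filter_upwards [hev] with x hx
      have hx0 : (0:ℝ) < ‖x‖ := by linarith
      have h1 : (1+‖x‖/2)^(-ρ) ≤ (‖x‖/2)^(-ρ) :=
        Real.rpow_le_rpow_of_nonpos (by positivity) (by linarith) (by linarith)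
      have h2 : (‖x‖/2)^(-ρ) = 2^ρ * ‖x‖^(-ρ) := by
        rw [div_eq_mul_inv, Real.mul_rpow (norm_nonneg x) (by positivity),
          Real.inv_rpow (by norm_num : (0:ℝ) ≤ 2), ← Real.rpow_neg (by norm_num : (0:ℝ) ≤ 2),
          neg_neg]
        ring
      have h3 : ‖x‖^(4:ℕ) = ‖x‖^((4:ℕ):ℝ) := by
        rw [Real.rpow_natCast]
      have h4 : ‖x‖^(-ρ) * ‖x‖^((4:ℕ):ℝ) = ‖x‖^(4-ρ) := by
        rw [← Real.rpow_add hx0]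
        congr 1
        push_cast
        ring
      calc cx x * Gn ≤ (C * ((‖x‖/2)^(-ρ)) * ‖x‖^4) * Gn := by
            apply mul_le_mul_of_nonneg_right _ hGn0
            rw [hcxdef]
            apply mul_le_mul_of_nonneg_right _ (by positivity)
            exact mul_le_mul_of_nonneg_left h1 hC.le
        _ = (C * 2^ρ * Gn) * (‖x‖^(-ρ) * ‖x‖^((4:ℕ):ℝ)) := by
            rw [h2, ← h3]; ring
        _ = (C * 2^ρ * Gn) * ‖x‖ ^ (4-ρ) := by rw [h4]
    · have h5 : Tendsto (fun r : ℝ => r ^ (-(ρ-4))) atTop (nhds 0) :=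
        tendsto_rpow_neg_atTop (by linarith)
      have h6 := (h5.comp hnorm).const_mul (C * 2^ρ * Gn)
      rw [mul_zero] at h6
      refine h6.congr (fun x => ?_)
      simp only [Function.comp_apply]
      norm_num
  -- assemble
  have hAev : ∀ᶠ x : E3 in cocompact E3,
      |∫ y in B, (‖x‖^4 * G (x - y) - π2) * f y| < ε/2 := by
    have h0 := hA
    rw [NormedAddCommGroup.tendsto_nhds_zero] at h0
    have := h0 (ε/2) (by positivity)
    simpa [Real.norm_eq_abs] using this
  have h17q : 17*π2*δ ≤ ε/4 := by
    rw [hδdef, ← mul_div_assoc, div_le_div_iff₀ (by positivity) (by norm_num : (0:ℝ) < 4)]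
    nlinarith [hε.le, hπ2pos]
  have hev2 : ∀ᶠ x : E3 in cocompact E3, 2 ≤ ‖x‖ := hnorm.eventually_ge_atTop _
  have hcxev : ∀ᶠ x : E3 in cocompact E3, cx x * Gn < ε/4 :=
    hcx.eventually (eventually_lt_nhds (show (0:ℝ) < ε/4 by positivity))
  filter_upwards [hAev, hev2, hcxev] with x hAx hx2 hcxx
  have hx0 : (0:ℝ) < ‖x‖ := by linarith
  have hsplit : ∫ y, (‖x‖^4 * G (x - y) - π2) * f y
      = (∫ y in B, (‖x‖^4 * G (x - y) - π2) * f y)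
        + ∫ y in Bᶜ, (‖x‖^4 * G (x - y) - π2) * f y :=
    (integral_add_compl measurableSet_closedBall (hint2 x)).symm
  have hptwise : ∀ y ∈ Bᶜ, |(‖x‖^4 * G (x - y) - π2) * f y|
      ≤ 17*π2*|f y| + cx x * G (x - y) := by
    intro y _
    have hG0 := G_nonneg (x - y)
    have hfy := hfC y
    have hx4 : (0:ℝ) ≤ ‖x‖^4 := by positivity
    rcases le_or_gt ‖y‖ (‖x‖/2) with hcase | hcase
    · have hxy : ‖x‖/2 ≤ ‖x - y‖ := by
        have := norm_sub_norm_le x y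
        linarith
      have hkb := key_bound hx0 hxy
      rw [← hπ2def] at hkb
      have habs : |‖x‖^4 * G (x - y) - π2| ≤ 17*π2 := by
        rw [abs_le]
        constructor
        · linarith [mul_nonneg hx4 hG0]
        · linarith
      rw [abs_mul]
      have h5 := mul_le_mul_of_nonneg_right habs (abs_nonneg (f y))
      have h7 : 0 ≤ cx x * G (x - y) := mul_nonneg (hcx0 x) hG0
      linarith
    · have hfy2 : |f y| ≤ C * (1+‖x‖/2)^(-ρ) := by
        refine (hdecay y).trans ?_
        apply mul_le_mul_of_nonneg_left _ hC.le
        apply Real.rpow_le_rpow_of_nonpos (by positivity) (by linarith) (by linarith)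
      rw [abs_mul]
      have habs2 : |‖x‖^4 * G (x - y) - π2| ≤ ‖x‖^4 * G (x - y) + π2 := by
        rw [abs_le]
        constructor
        · linarith [mul_nonneg hx4 hG0, hπ2pos]
        · linarith [mul_nonneg hx4 hG0, hπ2pos]
      calc |‖x‖^4 * G (x - y) - π2| * |f y|
          ≤ (‖x‖^4 * G (x - y) + π2) * |f y| :=
            mul_le_mul_of_nonneg_right habs2 (abs_nonneg _)
        _ = ‖x‖^4 * G (x - y) * |f y| + π2 * |f y| := by ring
        _ ≤ ‖x‖^4 * G (x - y) * (C * (1+‖x‖/2)^(-ρ)) + 17*π2*|f y| := by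
            have h5 := mul_le_mul_of_nonneg_left hfy2 (mul_nonneg hx4 hG0)
            linarith [h5, mul_nonneg hπ2pos.le (abs_nonneg (f y))]
        _ = 17*π2*|f y| + cx x * G (x - y) := by rw [hcxdef]; ring
  have hT2 : |∫ y in Bᶜ, (‖x‖^4 * G (x - y) - π2) * f y| ≤ 17*π2*δ + cx x * Gn := by
    have h8 := norm_integral_le_integral_norm (μ := volume.restrict Bᶜ)
      (f := fun y => (‖x‖^4 * G (x - y) - π2) * f y)
    simp only [Real.norm_eq_abs] at h8
    refine h8.trans ?_
    have h9 : ∫ y in Bᶜ, |(‖x‖^4 * G (x - y) - π2) * f y|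
        ≤ ∫ y in Bᶜ, (17*π2*|f y| + cx x * G (x - y)) := by
      apply setIntegral_mono_on ((hint2 x).abs.integrableOn)
        (((hfint.abs.const_mul _).add ((hGx x).const_mul _)).integrableOn)
        measurableSet_closedBall.compl hptwise
    refine h9.trans ?_
    rw [integral_add ((hfint.abs.const_mul _).integrableOn) (((hGx x).const_mul _).integrableOn),
      integral_const_mul, integral_const_mul]
    have h10 : ∫ y in Bᶜ, G (x - y) ≤ Gn := by
      have h11 := setIntegral_le_integral (s := Bᶜ) (hGx x)
        (ae_of_all _ fun y => G_nonneg (x - y))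
      rw [hGndef]
      refine h11.trans (le_of_eq ?_)
      exact integral_sub_left_eq_self G volume x
    exact add_le_add (mul_le_mul_of_nonneg_left hN.le (by positivity))
      (mul_le_mul_of_nonneg_left h10 (hcx0 x))
  rw [Real.norm_eq_abs, hsplit]
  calc |(∫ y in B, (‖x‖^4 * G (x - y) - π2) * f y)
        + ∫ y in Bᶜ, (‖x‖^4 * G (x - y) - π2) * f y|
      ≤ |∫ y in B, (‖x‖^4 * G (x - y) - π2) * f y|
        + |∫ y in Bᶜ, (‖x‖^4 * G (x - y) - π2) * f y| := abs_add_le _ _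
    _ < ε := by linarith [hAx, hT2, h17q, hcxx]
end
end

section
/- Let λ, α > 0, let f ∈ L¹(ℝ³) with f ≥ 0, and let W ≥ 0 be measurable with ∫_{ℝ³} (1+|ξ|) W(ξ) dξ < ∞, such that a.e. on ℝ³: (|ξ|+λ) f(ξ) ≤ (W * f)(ξ) and |ξ|² W(ξ) ≤ α (f * f)(ξ). Then there exist constants a, b > 0 and non-negative integrable functions g_n on ℝ³, for n ∈ ℕ₀, such that for every n: |ξ|ⁿ f(ξ) ≤ (g_n * f)(ξ) a.e., and ‖g_n‖_{L¹} ≤ a bⁿ (2n+1)^{n−1}. -/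
open MeasureTheory Filter

noncomputable section

/-- Convolution on `ℝ³`: `(f ∗ g)(ξ) = ∫ f(ξ-η) g(η) dη`. -/
def conv (f g : E3 → ℝ) (ξ : E3) : ℝ := ∫ η : E3, f (ξ - η) * g η

open Finset Nat

set_option maxHeartbeats 1000000

open Convolution Finset Nat in
lemma conv_eq (f g : E3 → ℝ) :
    conv f g = g ⋆[ContinuousLinearMap.mul ℝ ℝ, volume] f := by
  ext ξ
  simp only [conv, convolution_def, ContinuousLinearMap.mul_apply']
  exact integral_congr_ae (Filter.Eventually.of_forall fun η => mul_comm _ _)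

lemma conv_nonneg' {u v : E3 → ℝ} (hu : ∀ ξ, 0 ≤ u ξ) (hv : ∀ ξ, 0 ≤ v ξ) (ξ : E3) :
    0 ≤ conv u v ξ :=
  integral_nonneg fun η => mul_nonneg (hu _) (hv _)

lemma conv_integrable {u v : E3 → ℝ} (hu : Integrable u) (hv : Integrable v) :
    Integrable (conv u v) := by
  rw [conv_eq]; exact hv.integrable_convolution _ hu

lemma integral_conv {u v : E3 → ℝ} (hu : Integrable u) (hv : Integrable v) :
    ∫ ξ, conv u v ξ = (∫ ξ, u ξ) * (∫ ξ, v ξ) := by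
  rw [conv_eq, MeasureTheory.integral_convolution _ hv hu]
  simp [mul_comm]

lemma ae_conv_exists {u v : E3 → ℝ} (hu : Integrable u) (hv : Integrable v) :
    ∀ᵐ ξ : E3 ∂volume, Integrable (fun η => u (ξ - η) * v η) := by
  filter_upwards [hv.ae_convolution_exists (ContinuousLinearMap.mul ℝ ℝ) hu] with ξ hξ
  exact (hξ.integrable).congr (Filter.Eventually.of_forall fun η => mul_comm _ _)

open Convolution in
lemma conv_assoc_ae {u v f : E3 → ℝ} (hu : Integrable u) (hv : Integrable v)
    (hf : Integrable f) :
    ∀ᵐ ξ : E3 ∂volume, conv (conv u v) f ξ = conv u (conv v f) ξ := by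
  simp only [conv_eq]
  have h1 : ∀ᵐ y : E3 ∂volume, ConvolutionExistsAt f v y (ContinuousLinearMap.mul ℝ ℝ) volume :=
    hf.ae_convolution_exists _ hv
  have h2 : ∀ᵐ x : E3 ∂volume, ConvolutionExistsAt (fun x => ‖v x‖) (fun x => ‖u x‖) x
      (ContinuousLinearMap.mul ℝ ℝ) volume :=
    hv.norm.ae_convolution_exists _ hu.norm
  have h3 : ∀ᵐ x₀ : E3 ∂volume, ConvolutionExistsAt (fun x => ‖f x‖)
      ((fun x => ‖v x‖) ⋆[ContinuousLinearMap.mul ℝ ℝ, volume] fun x => ‖u x‖) x₀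
      (ContinuousLinearMap.mul ℝ ℝ) volume :=
    hf.norm.ae_convolution_exists _ (hv.norm.integrable_convolution _ hu.norm)
  filter_upwards [h3] with ξ hξ
  exact (convolution_assoc (ContinuousLinearMap.mul ℝ ℝ) (ContinuousLinearMap.mul ℝ ℝ)
    (ContinuousLinearMap.mul ℝ ℝ) (ContinuousLinearMap.mul ℝ ℝ)
    (fun x y z => mul_assoc x y z) hf.aestronglyMeasurable hv.aestronglyMeasurable
    hu.aestronglyMeasurable h1 h2 hξ).symm

lemma conv_mono_right {u v w : E3 → ℝ} (huint : Integrable u) (humeas : Measurable u)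
    (hupos : ∀ ξ, 0 ≤ u ξ) (hvmeas : AEStronglyMeasurable v volume)
    (hvw : ∀ᵐ η : E3 ∂volume, v η ≤ w η) (hvpos : ∀ᵐ η : E3 ∂volume, 0 ≤ v η)
    (hwint : Integrable w) :
    ∀ᵐ ξ : E3 ∂volume, conv u v ξ ≤ conv u w ξ := by
  filter_upwards [ae_conv_exists huint hwint] with ξ hξ
  have hmeas : AEStronglyMeasurable (fun η => u (ξ - η) * v η) volume := by
    refine AEStronglyMeasurable.mul ?_ hvmeas
    exact (humeas.comp (measurable_const.sub measurable_id)).aestronglyMeasurable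
  have hle : ∀ᵐ η : E3 ∂volume, u (ξ - η) * v η ≤ u (ξ - η) * w η := by
    filter_upwards [hvw] with η h
    exact mul_le_mul_of_nonneg_left h (hupos _)
  have hnn : ∀ᵐ η : E3 ∂volume, 0 ≤ u (ξ - η) * v η := by
    filter_upwards [hvpos] with η h
    exact mul_nonneg (hupos _) h
  have hvint : Integrable (fun η => u (ξ - η) * v η) := by
    refine hξ.mono' hmeas ?_
    filter_upwards [hle, hnn] with η h1 h2
    rwa [Real.norm_of_nonneg h2]
  exact integral_mono_ae hvint hξ hle

open Finset in
lemma conv_sum {ι : Type*} (s : Finset ι) (c : ι → ℝ) (A : ι → E3 → ℝ) (v : E3 → ℝ)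
    (hA : ∀ i ∈ s, Integrable (A i)) (hv : Integrable v) :
    ∀ᵐ ξ : E3 ∂volume,
      conv (fun x => ∑ i ∈ s, c i * A i x) v ξ = ∑ i ∈ s, c i * conv (A i) v ξ := by
  have h : ∀ᵐ ξ : E3 ∂volume, ∀ i ∈ (s : Set ι), Integrable (fun η => A i (ξ - η) * v η) :=
    (MeasureTheory.ae_ball_iff s.countable_toSet).2 fun i hi => ae_conv_exists (hA i hi) hv
  filter_upwards [h] with ξ hξ
  simp only [conv, sum_mul, mul_assoc]
  rw [integral_finset_sum]
  · exact Finset.sum_congr rfl fun i hi => (integral_const_mul (c i) _)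
  · intro i hi
    exact ((hξ i hi).const_mul (c i)).congr (Eventually.of_forall fun η => by ring)

open Finset in
lemma norm_pow_conv_le {u v : E3 → ℝ} (k : ℕ)
    (hupos : ∀ ξ, 0 ≤ u ξ) (hvpos : ∀ ξ, 0 ≤ v ξ)
    (hu : Integrable u) (hv : Integrable v)
    (hmu : ∀ j, j ≤ k → Integrable (fun ξ : E3 => ‖ξ‖^j * u ξ))
    (hmv : ∀ j, j ≤ k → Integrable (fun ξ : E3 => ‖ξ‖^j * v ξ)) :
    ∀ᵐ ξ : E3 ∂volume, ‖ξ‖^k * conv u v ξ ≤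
      ∑ j ∈ range (k+1), (k.choose j : ℝ) *
        conv (fun x : E3 => ‖x‖^j * u x) (fun x : E3 => ‖x‖^(k-j) * v x) ξ := by
  have hex : ∀ᵐ ξ : E3 ∂volume, ∀ j ∈ (range (k+1) : Set ℕ), Integrable
      (fun η => (‖ξ - η‖^j * u (ξ - η)) * (‖η‖^(k-j) * v η)) := by
    refine (MeasureTheory.ae_ball_iff (range (k+1)).countable_toSet).2 fun j hj => ?_
    simp only [coe_range, Set.mem_Iio, Nat.lt_succ_iff] at hj
    exact ae_conv_exists (hmu j hj) (hmv (k-j) (Nat.sub_le _ _))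
  filter_upwards [hex, ae_conv_exists hu hv] with ξ hξ hξ0
  have key : ∀ η : E3, ‖ξ‖^k * (u (ξ - η) * v η) ≤
      ∑ j ∈ range (k+1), (k.choose j : ℝ) *
        ((‖ξ - η‖^j * u (ξ - η)) * (‖η‖^(k-j) * v η)) := by
    intro η
    have h1 : ‖ξ‖^k ≤ (‖ξ - η‖ + ‖η‖)^k := by
      refine pow_le_pow_left₀ (norm_nonneg _) ?_ k
      calc ‖ξ‖ = ‖(ξ - η) + η‖ := by rw [sub_add_cancel]
        _ ≤ ‖ξ - η‖ + ‖η‖ := norm_add_le _ _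
    have h2 : ‖ξ‖^k * (u (ξ - η) * v η) ≤ (‖ξ - η‖ + ‖η‖)^k * (u (ξ - η) * v η) :=
      mul_le_mul_of_nonneg_right h1 (mul_nonneg (hupos _) (hvpos _))
    refine h2.trans (le_of_eq ?_)
    rw [add_pow]
    rw [Finset.sum_mul]
    refine Finset.sum_congr rfl fun j hj => ?_
    ring
  calc ‖ξ‖^k * conv u v ξ = ∫ η, ‖ξ‖^k * (u (ξ - η) * v η) := by
        rw [conv, integral_const_mul]
    _ ≤ ∫ η, ∑ j ∈ range (k+1), (k.choose j : ℝ) *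
        ((‖ξ - η‖^j * u (ξ - η)) * (‖η‖^(k-j) * v η)) := by
        refine integral_mono (hξ0.const_mul _) ?_ key
        refine integrable_finset_sum _ fun j hj => ?_
        exact (hξ j (by simpa using hj)).const_mul _
    _ = ∑ j ∈ range (k+1), (k.choose j : ℝ) *
        conv (fun x : E3 => ‖x‖^j * u x) (fun x : E3 => ‖x‖^(k-j) * v x) ξ := by
        rw [integral_finset_sum _ fun j hj => (hξ j (by simpa using hj)).const_mul _]
        exact Finset.sum_congr rfl fun j hj => by rw [conv, integral_const_mul]

/-- Proposition 4.2, first part.  Under the hypotheses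
`(|ξ|+λ) f ≤ W ∗ f` and `|ξ|² W ≤ α (f ∗ f)` a.e., there are constants `a, b > 0` and
non-negative integrable functions `gₙ` with `|ξ|ⁿ f ≤ gₙ ∗ f` a.e. and
`‖gₙ‖₁ ≤ a bⁿ (2n+1)^{n-1}`. -/
theorem exponential_fourier_bound_aux
    (lam α : ℝ) (hlam : 0 < lam) (hα : 0 < α)
    (f W : E3 → ℝ)
    (hfint : Integrable f) (hfpos : ∀ ξ : E3, 0 ≤ f ξ)
    (hWpos : ∀ ξ : E3, 0 ≤ W ξ) (hWmeas : Measurable W)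
    (hWint : Integrable (fun ξ : E3 => (1 + ‖ξ‖) * W ξ))
    (h1 : ∀ᵐ ξ : E3 ∂(volume), (‖ξ‖ + lam) * f ξ ≤ conv W f ξ)
    (h2 : ∀ᵐ ξ : E3 ∂(volume), ‖ξ‖^2 * W ξ ≤ α * conv f f ξ) :
    ∃ a b : ℝ, 0 < a ∧ 0 < b ∧ ∃ g : ℕ → E3 → ℝ, ∀ n : ℕ,
      (∀ ξ : E3, 0 ≤ g n ξ) ∧ Integrable (g n) ∧
      (∀ᵐ ξ : E3 ∂(volume), ‖ξ‖^n * f ξ ≤ conv (g n) f ξ) ∧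
      (∫ ξ : E3, g n ξ) ≤ a * b^n * (2*(n:ℝ)+1) ^ ((n:ℝ)-1) := by
  classical
  set F : ℝ := ∫ ξ : E3, f ξ with hFdef
  have hF0 : 0 ≤ F := integral_nonneg hfpos
  set w : ℝ := ∫ ξ : E3, (1 + ‖ξ‖) * W ξ with hwdef
  have hw0 : 0 ≤ w := integral_nonneg fun ξ => mul_nonneg (by positivity) (hWpos ξ)
  set A : ℝ := 1 + w / lam with hAdef
  have hA1 : 1 ≤ A := le_add_of_nonneg_right (div_nonneg hw0 hlam.le)
  have hA0 : 0 < A := lt_of_lt_of_le one_pos hA1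
  set D : ℝ := w + α * (A^2 * F^2) with hDdef
  have hwD : w ≤ D := le_add_of_nonneg_right (by positivity)
  have hαD : α * (A^2 * F^2) ≤ D := le_add_of_nonneg_left hw0
  have hD0 : 0 ≤ D := hw0.trans hwD
  set C : ℝ := 1 + D with hCdef
  have hC1 : 1 ≤ C := le_add_of_nonneg_right hD0
  have hC0 : 0 < C := lt_of_lt_of_le one_pos hC1
  have hDC : D ≤ C := le_add_of_nonneg_left zero_le_one
  -- basic measurability / positivity facts
  have hfpow_meas : ∀ m : ℕ, AEStronglyMeasurable (fun ξ : E3 => ‖ξ‖^m * f ξ) volume :=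
    fun m => ((measurable_norm.pow_const m).aestronglyMeasurable).mul hfint.1
  have hfpow_nonneg : ∀ (m : ℕ) (ξ : E3), 0 ≤ ‖ξ‖^m * f ξ :=
    fun m ξ => mul_nonneg (by positivity) (hfpos ξ)
  have hWk_meas : ∀ k : ℕ, Measurable (fun ξ : E3 => ‖ξ‖^k * W ξ) :=
    fun k => (measurable_norm.pow_const k).mul hWmeas
  have hWk_nonneg : ∀ (k : ℕ) (ξ : E3), 0 ≤ ‖ξ‖^k * W ξ :=
    fun k ξ => mul_nonneg (by positivity) (hWpos ξ)
  -- integrability of W and its first moment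
  have hWint0 : Integrable W := by
    refine hWint.mono' hWmeas.aestronglyMeasurable (Eventually.of_forall fun ξ => ?_)
    rw [Real.norm_of_nonneg (hWpos ξ)]
    nlinarith [hWpos ξ, norm_nonneg ξ]
  have hWbd0 : (∫ ξ : E3, W ξ) ≤ w :=
    integral_mono hWint0 hWint fun ξ => by nlinarith [hWpos ξ, norm_nonneg ξ]
  have hWk01 : ∀ k : ℕ, k ≤ 1 → Integrable (fun ξ : E3 => ‖ξ‖^k * W ξ) ∧
      (∫ ξ : E3, ‖ξ‖^k * W ξ) ≤ w := by
    intro k hk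
    have hptw : ∀ ξ : E3, ‖ξ‖^k * W ξ ≤ (1 + ‖ξ‖) * W ξ := by
      intro ξ
      rcases Nat.le_one_iff_eq_zero_or_eq_one.mp hk with rfl | rfl
      · simp; nlinarith [hWpos ξ, norm_nonneg ξ]
      · simp; nlinarith [hWpos ξ, norm_nonneg ξ]
    have hint : Integrable (fun ξ : E3 => ‖ξ‖^k * W ξ) := by
      refine hWint.mono' (hWk_meas k).aestronglyMeasurable (Eventually.of_forall fun ξ => ?_)
      rw [Real.norm_of_nonneg (hWk_nonneg k ξ)]
      exact hptw ξ
    exact ⟨hint, integral_mono hint hWint hptw⟩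
  -- derived bound for moments of f
  have hmom : ∀ (m : ℕ) (g : E3 → ℝ), Integrable g →
      (∀ᵐ ξ : E3 ∂volume, ‖ξ‖^m * f ξ ≤ conv g f ξ) →
      Integrable (fun ξ : E3 => ‖ξ‖^m * f ξ) ∧
      (∫ ξ : E3, ‖ξ‖^m * f ξ) ≤ (∫ ξ : E3, g ξ) * F := by
    intro m g hgint hae
    have hconv := conv_integrable hgint hfint
    have hint : Integrable (fun ξ : E3 => ‖ξ‖^m * f ξ) := by
      refine hconv.mono' (hfpow_meas m) ?_
      filter_upwards [hae] with ξ h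
      rw [Real.norm_of_nonneg (hfpow_nonneg m ξ)]; exact h
    exact ⟨hint, le_trans (integral_mono_ae hint hconv hae)
      (le_of_eq (integral_conv hgint hfint))⟩
  -- moments of W
  have hWmom : ∀ k : ℕ,
      (∀ j : ℕ, j + 2 ≤ k → Integrable (fun ξ : E3 => ‖ξ‖^j * f ξ) ∧
        (∫ ξ : E3, ‖ξ‖^j * f ξ) ≤ A * C^j * (j)! * F) →
      Integrable (fun ξ : E3 => ‖ξ‖^k * W ξ) ∧
      (∫ ξ : E3, ‖ξ‖^k * W ξ) ≤ D * C^k * (k)! := by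
    intro k hjm
    match k with
    | 0 =>
      obtain ⟨hint, hbd⟩ := hWk01 0 (by norm_num)
      exact ⟨hint, by simpa using hbd.trans hwD⟩
    | 1 =>
      obtain ⟨hint, hbd⟩ := hWk01 1 le_rfl
      refine ⟨hint, hbd.trans ?_⟩
      simp only [factorial_one, cast_one, pow_one, mul_one]
      nlinarith
    | (m+2) =>
      have hfj : ∀ j : ℕ, j ≤ m → Integrable (fun ξ : E3 => ‖ξ‖^j * f ξ) ∧
          (∫ ξ : E3, ‖ξ‖^j * f ξ) ≤ A * C^j * (j)! * F := fun j hj => hjm j (by omega)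
      have hfjint : ∀ j : ℕ, j ≤ m → Integrable (fun ξ : E3 => ‖ξ‖^j * f ξ) :=
        fun j hj => (hfj j hj).1
      have hSint : ∀ j ∈ range (m+1), Integrable
          (conv (fun x : E3 => ‖x‖^j * f x) (fun x : E3 => ‖x‖^(m-j) * f x)) := by
        intro j hj
        rw [mem_range, Nat.lt_succ_iff] at hj
        exact conv_integrable (hfjint j hj) (hfjint (m-j) (Nat.sub_le _ _))
      set S : E3 → ℝ := fun ξ => ∑ j ∈ range (m+1), (m.choose j : ℝ) *
          conv (fun x : E3 => ‖x‖^j * f x) (fun x : E3 => ‖x‖^(m-j) * f x) ξ with hSdef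
      have hSint' : Integrable S :=
        integrable_finset_sum _ fun j hj => ((hSint j hj).const_mul _)
      have hkey := norm_pow_conv_le (u := f) (v := f) m hfpos hfpos hfint hfint hfjint hfjint
      have hae : ∀ᵐ ξ : E3 ∂volume, ‖ξ‖^(m+2) * W ξ ≤ α * S ξ := by
        filter_upwards [h2, hkey] with ξ hξ2 hξk
        have e : ‖ξ‖^(m+2) * W ξ = ‖ξ‖^m * (‖ξ‖^2 * W ξ) := by ring
        rw [e]
        calc ‖ξ‖^m * (‖ξ‖^2 * W ξ) ≤ ‖ξ‖^m * (α * conv f f ξ) :=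
              mul_le_mul_of_nonneg_left hξ2 (by positivity)
          _ = α * (‖ξ‖^m * conv f f ξ) := by ring
          _ ≤ α * S ξ := mul_le_mul_of_nonneg_left hξk hα.le
      have hint : Integrable (fun ξ : E3 => ‖ξ‖^(m+2) * W ξ) := by
        refine (hSint'.const_mul α).mono' (hWk_meas (m+2)).aestronglyMeasurable ?_
        filter_upwards [hae] with ξ h
        rw [Real.norm_of_nonneg (hWk_nonneg _ ξ)]; exact h
      refine ⟨hint, ?_⟩
      have hstep1 : (∫ ξ : E3, ‖ξ‖^(m+2) * W ξ) ≤ ∫ ξ : E3, α * S ξ :=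
        integral_mono_ae hint (hSint'.const_mul α) hae
      have hstep2 : (∫ ξ : E3, α * S ξ) = α * ∑ j ∈ range (m+1), (m.choose j : ℝ) *
          ((∫ ξ : E3, ‖ξ‖^j * f ξ) * (∫ ξ : E3, ‖ξ‖^(m-j) * f ξ)) := by
        rw [integral_const_mul]
        congr 1
        rw [hSdef, integral_finset_sum _ fun j hj => ((hSint j hj).const_mul _)]
        refine Finset.sum_congr rfl fun j hj => ?_
        rw [mem_range, Nat.lt_succ_iff] at hj
        rw [integral_const_mul, integral_conv (hfjint j hj) (hfjint (m-j) (Nat.sub_le _ _))]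
      have hstep3 : ∑ j ∈ range (m+1), (m.choose j : ℝ) *
          ((∫ ξ : E3, ‖ξ‖^j * f ξ) * (∫ ξ : E3, ‖ξ‖^(m-j) * f ξ)) ≤
          ((m:ℝ)+1) * (A^2 * F^2 * C^m * (m)!) := by
        have hbd : ∀ j ∈ range (m+1), (m.choose j : ℝ) *
            ((∫ ξ : E3, ‖ξ‖^j * f ξ) * (∫ ξ : E3, ‖ξ‖^(m-j) * f ξ)) ≤
            A^2 * F^2 * C^m * (m)! := by
          intro j hj
          rw [mem_range, Nat.lt_succ_iff] at hj
          have i1 : 0 ≤ ∫ ξ : E3, ‖ξ‖^j * f ξ := integral_nonneg (hfpow_nonneg j)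
          have i2 : 0 ≤ ∫ ξ : E3, ‖ξ‖^(m-j) * f ξ := integral_nonneg (hfpow_nonneg (m-j))
          have b1 := (hfj j hj).2
          have b2 := (hfj (m-j) (Nat.sub_le _ _)).2
          have hprod : (∫ ξ : E3, ‖ξ‖^j * f ξ) * (∫ ξ : E3, ‖ξ‖^(m-j) * f ξ) ≤
              (A * C^j * (j)! * F) * (A * C^(m-j) * ((m-j))! * F) :=
            mul_le_mul b1 b2 i2 (by positivity)
          have hcp : C^j * C^(m-j) = C^m := by
            rw [← pow_add, Nat.add_sub_cancel' hj]
          have hcf : (m.choose j : ℝ) * ((j)! : ℝ) * (((m-j))! : ℝ) = ((m)! : ℝ) := by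
            exact_mod_cast congrArg (Nat.cast (R := ℝ)) (Nat.choose_mul_factorial_mul_factorial hj)
          calc (m.choose j : ℝ) * ((∫ ξ : E3, ‖ξ‖^j * f ξ) * (∫ ξ : E3, ‖ξ‖^(m-j) * f ξ)) ≤
              (m.choose j : ℝ) * ((A * C^j * (j)! * F) * (A * C^(m-j) * ((m-j))! * F)) :=
                mul_le_mul_of_nonneg_left hprod (Nat.cast_nonneg _)
            _ = (A^2 * F^2) * (C^j * C^(m-j)) * ((m.choose j : ℝ) * ((j)!:ℝ) * (((m-j))!:ℝ)) := by
                ring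
            _ = A^2 * F^2 * C^m * (m)! := by rw [hcp, hcf]
        calc ∑ j ∈ range (m+1), (m.choose j : ℝ) *
            ((∫ ξ : E3, ‖ξ‖^j * f ξ) * (∫ ξ : E3, ‖ξ‖^(m-j) * f ξ)) ≤
            ∑ _j ∈ range (m+1), A^2 * F^2 * C^m * (m)! := Finset.sum_le_sum hbd
          _ = ((m:ℝ)+1) * (A^2 * F^2 * C^m * (m)!) := by
            rw [Finset.sum_const, card_range]; push_cast; ring
      have hfin : α * (((m:ℝ)+1) * (A^2 * F^2 * C^m * (m)!)) ≤ D * C^(m+2) * ((m+2))! := by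
        have e1 : α * (((m:ℝ)+1) * (A^2 * F^2 * C^m * (m)!)) =
            (α * (A^2 * F^2)) * C^m * (((m:ℝ)+1) * ((m)!:ℝ)) := by ring
        have e2 : ((m:ℝ)+1) * ((m)!:ℝ) = (((m+1))! : ℝ) := by
          rw [Nat.factorial_succ]; push_cast; ring
        have hCle : C^m ≤ C^(m+2) := pow_le_pow_right₀ hC1 (by omega)
        have hfle : (((m+1))! : ℝ) ≤ (((m+2))! : ℝ) := by
          exact_mod_cast Nat.factorial_le (by omega)
        rw [e1, e2]
        have h1' : (α * (A^2 * F^2)) * C^m ≤ D * C^(m+2) :=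
          mul_le_mul hαD hCle (by positivity) hD0
        exact mul_le_mul h1' hfle (by positivity) (by positivity)
      calc (∫ ξ : E3, ‖ξ‖^(m+2) * W ξ) ≤ ∫ ξ : E3, α * S ξ := hstep1
        _ = α * ∑ j ∈ range (m+1), (m.choose j : ℝ) *
            ((∫ ξ : E3, ‖ξ‖^j * f ξ) * (∫ ξ : E3, ‖ξ‖^(m-j) * f ξ)) := hstep2
        _ ≤ α * (((m:ℝ)+1) * (A^2 * F^2 * C^m * (m)!)) := by
            refine mul_le_mul_of_nonneg_left hstep3 hα.le
        _ ≤ D * C^(m+2) * ((m+2))! := hfin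
  -- the main induction
  have main : ∀ n : ℕ, ∃ g : ℕ → E3 → ℝ, ∀ m : ℕ, m ≤ n →
      (∀ ξ : E3, 0 ≤ g m ξ) ∧ Integrable (g m) ∧
      (∀ᵐ ξ : E3 ∂volume, ‖ξ‖^m * f ξ ≤ conv (g m) f ξ) ∧
      (∫ ξ : E3, g m ξ) ≤ A * C^m * (m)! := by
    intro n
    induction n with
    | zero =>
      refine ⟨fun _ x => lam⁻¹ * W x, ?_⟩
      intro m hm
      rw [Nat.le_zero] at hm
      subst hm
      refine ⟨fun ξ => mul_nonneg (inv_nonneg.2 hlam.le) (hWpos ξ), hWint0.const_mul _, ?_, ?_⟩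
      · filter_upwards [h1] with ξ hξ
        have hc : conv (fun x => lam⁻¹ * W x) f ξ = lam⁻¹ * conv W f ξ := by
          simp only [conv, mul_assoc]
          rw [integral_const_mul]
        have hlf : lam * f ξ ≤ conv W f ξ :=
          le_trans (by nlinarith [hfpos ξ, norm_nonneg ξ]) hξ
        rw [pow_zero, one_mul, hc]
        calc f ξ = lam⁻¹ * (lam * f ξ) := by field_simp
          _ ≤ lam⁻¹ * conv W f ξ :=
            mul_le_mul_of_nonneg_left hlf (inv_nonneg.2 hlam.le)
      · rw [integral_const_mul]
        have : lam⁻¹ * (∫ ξ : E3, W ξ) ≤ lam⁻¹ * w :=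
          mul_le_mul_of_nonneg_left hWbd0 (inv_nonneg.2 hlam.le)
        refine this.trans ?_
        simp only [pow_zero, factorial_zero, cast_one, mul_one]
        rw [inv_mul_eq_div]
        linarith
    | succ n ih =>
      obtain ⟨g, hg⟩ := ih
      have hfmom : ∀ m : ℕ, m ≤ n → Integrable (fun ξ : E3 => ‖ξ‖^m * f ξ) ∧
          (∫ ξ : E3, ‖ξ‖^m * f ξ) ≤ A * C^m * (m)! * F := by
        intro m hm
        obtain ⟨p1, p2, p3, p4⟩ := hg m hm
        obtain ⟨hi, hb⟩ := hmom m (g m) p2 p3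
        exact ⟨hi, hb.trans (mul_le_mul_of_nonneg_right p4 hF0)⟩
      have hWm : ∀ k : ℕ, k ≤ n → Integrable (fun ξ : E3 => ‖ξ‖^k * W ξ) ∧
          (∫ ξ : E3, ‖ξ‖^k * W ξ) ≤ D * C^k * (k)! :=
        fun k hk => hWmom k (fun j hj => hfmom j (by omega))
      have hGint : ∀ k ∈ range (n+1),
          Integrable (conv (fun x : E3 => ‖x‖^k * W x) (g (n-k))) := by
        intro k hk
        rw [mem_range, Nat.lt_succ_iff] at hk
        exact conv_integrable (hWm k hk).1 (hg (n-k) (Nat.sub_le _ _)).2.1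
      set gnew : E3 → ℝ := fun x => ∑ k ∈ range (n+1), (n.choose k : ℝ) *
          conv (fun y : E3 => ‖y‖^k * W y) (g (n-k)) x with hgnewdef
      have hgnew_nonneg : ∀ ξ : E3, 0 ≤ gnew ξ := by
        intro ξ
        refine Finset.sum_nonneg fun k hk => mul_nonneg (Nat.cast_nonneg _) ?_
        rw [mem_range, Nat.lt_succ_iff] at hk
        exact conv_nonneg' (hWk_nonneg k) (hg (n-k) (Nat.sub_le _ _)).1 ξ
      have hgnew_int : Integrable gnew :=
        integrable_finset_sum _ fun k hk => ((hGint k hk).const_mul _)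
      -- the a.e. inequality for n+1
      have e1 : ∀ᵐ ξ : E3 ∂volume, ‖ξ‖^(n+1) * f ξ ≤ ‖ξ‖^n * conv W f ξ := by
        filter_upwards [h1] with ξ hξ
        have h' : ‖ξ‖ * f ξ ≤ conv W f ξ :=
          le_trans (by nlinarith [hfpos ξ, hlam]) hξ
        calc ‖ξ‖^(n+1) * f ξ = ‖ξ‖^n * (‖ξ‖ * f ξ) := by ring
          _ ≤ ‖ξ‖^n * conv W f ξ := mul_le_mul_of_nonneg_left h' (by positivity)
      have e2 := norm_pow_conv_le (u := W) (v := f) n hWpos hfpos hWint0 hfint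
        (fun j hj => (hWm j hj).1) (fun j hj => (hfmom j hj).1)
      have e3 : ∀ᵐ ξ : E3 ∂volume, ∀ j ∈ ((range (n+1) : Finset ℕ) : Set ℕ),
          conv (fun x : E3 => ‖x‖^j * W x) (fun x : E3 => ‖x‖^(n-j) * f x) ξ ≤
          conv (fun x : E3 => ‖x‖^j * W x) (conv (g (n-j)) f) ξ := by
        refine (MeasureTheory.ae_ball_iff (range (n+1)).countable_toSet).2 fun j hj => ?_
        simp only [coe_range, Set.mem_Iio, Nat.lt_succ_iff] at hj
        exact conv_mono_right (hWm j hj).1 (hWk_meas j) (hWk_nonneg j)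
          (hfpow_meas (n-j)) (hg (n-j) (Nat.sub_le _ _)).2.2.1
          (Eventually.of_forall (hfpow_nonneg (n-j)))
          (conv_integrable (hg (n-j) (Nat.sub_le _ _)).2.1 hfint)
      have e4 : ∀ᵐ ξ : E3 ∂volume, ∀ j ∈ ((range (n+1) : Finset ℕ) : Set ℕ),
          conv (conv (fun x : E3 => ‖x‖^j * W x) (g (n-j))) f ξ =
          conv (fun x : E3 => ‖x‖^j * W x) (conv (g (n-j)) f) ξ := by
        refine (MeasureTheory.ae_ball_iff (range (n+1)).countable_toSet).2 fun j hj => ?_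
        simp only [coe_range, Set.mem_Iio, Nat.lt_succ_iff] at hj
        exact conv_assoc_ae (hWm j hj).1 (hg (n-j) (Nat.sub_le _ _)).2.1 hfint
      have e5 := conv_sum (range (n+1)) (fun k => (n.choose k : ℝ))
        (fun k => conv (fun y : E3 => ‖y‖^k * W y) (g (n-k))) f hGint hfint
      have hae_new : ∀ᵐ ξ : E3 ∂volume, ‖ξ‖^(n+1) * f ξ ≤ conv gnew f ξ := by
        filter_upwards [e1, e2, e3, e4, e5] with ξ b1 b2 b3 b4 b5
        calc ‖ξ‖^(n+1) * f ξ ≤ ‖ξ‖^n * conv W f ξ := b1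
          _ ≤ ∑ j ∈ range (n+1), (n.choose j : ℝ) *
              conv (fun x : E3 => ‖x‖^j * W x) (fun x : E3 => ‖x‖^(n-j) * f x) ξ := b2
          _ ≤ ∑ j ∈ range (n+1), (n.choose j : ℝ) *
              conv (fun x : E3 => ‖x‖^j * W x) (conv (g (n-j)) f) ξ :=
            Finset.sum_le_sum fun j hj =>
              mul_le_mul_of_nonneg_left (b3 j (Finset.mem_coe.mpr hj)) (Nat.cast_nonneg _)
          _ = ∑ j ∈ range (n+1), (n.choose j : ℝ) *
              conv (conv (fun x : E3 => ‖x‖^j * W x) (g (n-j))) f ξ :=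
            (Finset.sum_congr rfl fun j hj => by rw [b4 j (Finset.mem_coe.mpr hj)]).symm
          _ = conv gnew f ξ := b5.symm
      -- the integral bound for n+1
      have hint_new : (∫ ξ : E3, gnew ξ) ≤ A * C^(n+1) * ((n+1))! := by
        have hv : (∫ ξ : E3, gnew ξ) = ∑ k ∈ range (n+1), (n.choose k : ℝ) *
            ((∫ ξ : E3, ‖ξ‖^k * W ξ) * (∫ ξ : E3, g (n-k) ξ)) := by
          rw [hgnewdef, integral_finset_sum _ fun k hk => ((hGint k hk).const_mul _)]
          refine Finset.sum_congr rfl fun k hk => ?_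
          rw [mem_range, Nat.lt_succ_iff] at hk
          rw [integral_const_mul,
            integral_conv (hWm k hk).1 (hg (n-k) (Nat.sub_le _ _)).2.1]
        rw [hv]
        have hbd : ∀ k ∈ range (n+1), (n.choose k : ℝ) *
            ((∫ ξ : E3, ‖ξ‖^k * W ξ) * (∫ ξ : E3, g (n-k) ξ)) ≤
            D * A * C^n * (n)! := by
          intro k hk
          rw [mem_range, Nat.lt_succ_iff] at hk
          have i1 : 0 ≤ ∫ ξ : E3, ‖ξ‖^k * W ξ := integral_nonneg (hWk_nonneg k)
          have i2 : 0 ≤ ∫ ξ : E3, g (n-k) ξ :=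
            integral_nonneg (hg (n-k) (Nat.sub_le _ _)).1
          have b1' := (hWm k hk).2
          have b2' := (hg (n-k) (Nat.sub_le _ _)).2.2.2
          have hprod : (∫ ξ : E3, ‖ξ‖^k * W ξ) * (∫ ξ : E3, g (n-k) ξ) ≤
              (D * C^k * (k)!) * (A * C^(n-k) * ((n-k))!) :=
            mul_le_mul b1' b2' i2 (by positivity)
          have hcp : C^k * C^(n-k) = C^n := by
            rw [← pow_add, Nat.add_sub_cancel' hk]
          have hcf : (n.choose k : ℝ) * ((k)! : ℝ) * (((n-k))! : ℝ) = ((n)! : ℝ) := by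
            exact_mod_cast congrArg (Nat.cast (R := ℝ)) (Nat.choose_mul_factorial_mul_factorial hk)
          calc (n.choose k : ℝ) * ((∫ ξ : E3, ‖ξ‖^k * W ξ) * (∫ ξ : E3, g (n-k) ξ)) ≤
              (n.choose k : ℝ) * ((D * C^k * (k)!) * (A * C^(n-k) * ((n-k))!)) :=
                mul_le_mul_of_nonneg_left hprod (Nat.cast_nonneg _)
            _ = (D * A) * (C^k * C^(n-k)) * ((n.choose k : ℝ) * ((k)!:ℝ) * (((n-k))!:ℝ)) := by
                ring
            _ = D * A * C^n * (n)! := by rw [hcp, hcf]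
        calc ∑ k ∈ range (n+1), (n.choose k : ℝ) *
            ((∫ ξ : E3, ‖ξ‖^k * W ξ) * (∫ ξ : E3, g (n-k) ξ)) ≤
            ∑ _k ∈ range (n+1), D * A * C^n * (n)! := Finset.sum_le_sum hbd
          _ = ((n:ℝ)+1) * (D * A * C^n * (n)!) := by
              rw [Finset.sum_const, card_range]; push_cast; ring
          _ ≤ A * C^(n+1) * ((n+1))! := by
              have e2' : ((n:ℝ)+1) * ((n)!:ℝ) = (((n+1))! : ℝ) := by
                rw [Nat.factorial_succ]; push_cast; ring
              have hDCn : D * C^n ≤ C * C^n :=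
                mul_le_mul_of_nonneg_right hDC (by positivity)
              calc ((n:ℝ)+1) * (D * A * C^n * (n)!) =
                  A * (D * C^n) * (((n:ℝ)+1) * ((n)!:ℝ)) := by ring
                _ = A * (D * C^n) * (((n+1))! : ℝ) := by rw [e2']
                _ ≤ A * (C * C^n) * (((n+1))! : ℝ) := by
                    refine mul_le_mul_of_nonneg_right ?_ (by positivity)
                    exact mul_le_mul_of_nonneg_left hDCn hA0.le
                _ = A * C^(n+1) * (((n+1))! : ℝ) := by ring
      refine ⟨Function.update g (n+1) gnew, ?_⟩
      intro m hm
      by_cases hmn : m ≤ n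
      · rw [Function.update_of_ne (by omega)]
        exact hg m hmn
      · have hm' : m = n + 1 := by omega
        subst hm'
        rw [Function.update_self]
        exact ⟨hgnew_nonneg, hgnew_int, hae_new, hint_new⟩
  -- assemble the answer
  choose G hG using main
  refine ⟨A, 3*C, hA0, by positivity, fun n => G n n, fun n => ?_⟩
  obtain ⟨p1, p2, p3, p4⟩ := hG n n le_rfl
  refine ⟨p1, p2, p3, p4.trans ?_⟩
  have key : (((n)!) : ℝ) ≤ 3^n * (2*(n:ℝ)+1) ^ ((n:ℝ)-1) := by
    match n with
    | 0 => simp [Real.one_rpow]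
    | (m+1) =>
      have h0 : (2*((m+1:ℕ):ℝ)+1) ^ (((m+1:ℕ):ℝ)-1) = (2*((m+1:ℕ):ℝ)+1) ^ (m:ℕ) := by
        rw [show (((m+1:ℕ):ℝ)-1) = ((m:ℕ):ℝ) by push_cast; ring, Real.rpow_natCast]
      rw [h0]
      have hnat : ((m+1))! ≤ (2*(m+1)+1)^m * 3^(m+1) := by
        calc ((m+1))! ≤ (m+1)^(m+1) := Nat.factorial_le_pow (m+1)
          _ = (m+1)^m * (m+1) := by rw [pow_succ]
          _ ≤ (2*(m+1)+1)^m * 3^(m+1) := by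
            refine Nat.mul_le_mul (Nat.pow_le_pow_left (by omega) m) ?_
            calc m+1 ≤ 2^(m+1) := (Nat.lt_two_pow_self (n := m+1)).le
              _ ≤ 3^(m+1) := Nat.pow_le_pow_left (by norm_num) (m+1)
      calc ((((m+1))!) : ℝ) ≤ ((2*(m+1)+1 : ℕ)^m * 3^(m+1) : ℕ) := by exact_mod_cast hnat
        _ = 3^(m+1) * (2*((m+1:ℕ):ℝ)+1)^(m:ℕ) := by push_cast; ring
  calc A * C^n * ((n)! : ℝ) ≤ A * C^n * (3^n * (2*(n:ℝ)+1) ^ ((n:ℝ)-1)) := by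
        refine mul_le_mul_of_nonneg_left key (by positivity)
    _ = A * (3*C)^n * (2*(n:ℝ)+1) ^ ((n:ℝ)-1) := by rw [mul_pow]; ring
end
end

section
/- Let W and V be non-negative measurable functions on ℝ³ and a, b > 0 constants such that for all n ∈ ℕ₀ and all p ∈ [1,∞]: ‖ |ξ|ⁿ W ‖_{L¹} ≤ a bⁿ (2n+1)^{n−1} and ‖ |ξ|ⁿ V ‖_{L^p} ≤ a bⁿ (2n+1)^{n−1}. Let λ > 0, let f ∈ L²(ℝ³) ∩ L^∞(ℝ³) with f ≥ 0, and let g ≥ 0 be measurable, such that a.e. on ℝ³: (|ξ|+λ) f(ξ) ≤ (W * f)(ξ) + (V * g)(ξ) and |ξ|² g(ξ) ≤ (V * f)(ξ). Then there exist constants ã, b̃ > 0 such that for all n ∈ ℕ₀: ‖ |ξ|ⁿ f ‖_{L^∞} ≤ ã b̃ⁿ (2n+1)^{n−1} and ‖ |ξ|^{n+2} g ‖_{L^∞} ≤ ã b̃^{n+2} (2(n+2)+1)^{n+1}. -/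
open MeasureTheory Filter
open Metric
open scoped ENNReal NNReal

noncomputable section

namespace EFBS

lemma succ_pow_le (k : ℕ) : ((k:ℝ)+1)^k ≤ Real.exp 1 ^ k * (Nat.factorial k : ℝ) := by
  induction k with
  | zero => simp
  | succ k ih =>
    have hk1 : (0:ℝ) < (k:ℝ)+1 := by positivity
    have key : ((k:ℝ)+2)^(k+1) ≤ Real.exp 1 * ((k:ℝ)+1)^(k+1) := by
      have h1 : (k:ℝ)+2 = (1 + 1/((k:ℝ)+1)) * ((k:ℝ)+1) := by field_simp; ring
      have h2 : (1 + 1/((k:ℝ)+1)) ≤ Real.exp (1/((k:ℝ)+1)) := by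
        have := Real.add_one_le_exp (1/((k:ℝ)+1)); linarith
      have h3 : (1 + 1/((k:ℝ)+1))^(k+1) ≤ Real.exp (1/((k:ℝ)+1)) ^ (k+1) :=
        pow_le_pow_left₀ (by positivity) h2 _
      have h4 : Real.exp (1/((k:ℝ)+1)) ^ (k+1) = Real.exp 1 := by
        rw [← Real.exp_nat_mul]
        congr 1
        field_simp
        simp
      calc ((k:ℝ)+2)^(k+1) = (1 + 1/((k:ℝ)+1))^(k+1) * ((k:ℝ)+1)^(k+1) := by
            rw [h1, mul_pow]
        _ ≤ Real.exp 1 * ((k:ℝ)+1)^(k+1) := by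
            rw [← h4]
            exact mul_le_mul_of_nonneg_right h3 (by positivity)
    have step : ((k:ℝ)+1+1)^(k+1) ≤ Real.exp 1 ^ (k+1) * (Nat.factorial (k+1) : ℝ) := by
      calc ((k:ℝ)+1+1)^(k+1) = ((k:ℝ)+2)^(k+1) := by ring
        _ ≤ Real.exp 1 * ((k:ℝ)+1)^(k+1) := key
        _ = Real.exp 1 * (((k:ℝ)+1)^k * ((k:ℝ)+1)) := by ring
        _ ≤ Real.exp 1 * ((Real.exp 1 ^ k * (Nat.factorial k : ℝ)) * ((k:ℝ)+1)) := by
            have h5 : ((k:ℝ)+1)^k * ((k:ℝ)+1) ≤ (Real.exp 1 ^ k * (Nat.factorial k : ℝ)) * ((k:ℝ)+1) :=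
              mul_le_mul_of_nonneg_right ih (le_of_lt hk1)
            exact mul_le_mul_of_nonneg_left h5 (Real.exp_pos 1).le
        _ = Real.exp 1 ^ (k+1) * (Nat.factorial (k+1) : ℝ) := by
            rw [Nat.factorial_succ]; push_cast; ring
    push_cast
    push_cast at step
    convert step using 2 <;> ring

/-- `c k = (2k+1)^(k-1)` (with real exponent) is at most `k! (2e)^k`. -/
lemma c_le (k : ℕ) :
    (2*(k:ℝ)+1) ^ ((k:ℝ)-1) ≤ (Nat.factorial k : ℝ) * (2*Real.exp 1)^k := by
  rcases Nat.eq_zero_or_pos k with h | h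
  · subst h; simp
  · have hcast : ((k:ℝ)-1) = ((k-1:ℕ):ℝ) := by
      push_cast [Nat.cast_sub h]
      ring
    rw [hcast, Real.rpow_natCast]
    have h1 : (2*(k:ℝ)+1) ^ (k-1:ℕ) ≤ (2*((k:ℝ)+1)) ^ (k-1:ℕ) :=
      pow_le_pow_left₀ (by positivity) (by linarith) _
    have h2 : (2*((k:ℝ)+1)) ^ (k-1:ℕ) = 2^(k-1:ℕ) * ((k:ℝ)+1)^(k-1:ℕ) := mul_pow _ _ _
    have h3 : ((k:ℝ)+1)^(k-1:ℕ) * ((k:ℝ)+1) = ((k:ℝ)+1)^k := by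
      rw [← pow_succ]
      congr 1
      omega
    have h4 : ((k:ℝ)+1)^(k-1:ℕ) ≤ ((k:ℝ)+1)^k :=
      pow_le_pow_right₀ (by have := Nat.cast_nonneg (α:=ℝ) k; linarith) (Nat.sub_le k 1)
    have h5 : (2:ℝ)^(k-1:ℕ) ≤ 2^k := pow_le_pow_right₀ (by norm_num) (Nat.sub_le k 1)
    calc (2*(k:ℝ)+1) ^ (k-1:ℕ) ≤ 2^(k-1:ℕ) * ((k:ℝ)+1)^(k-1:ℕ) := by rw [← h2]; exact h1
      _ ≤ 2^k * ((k:ℝ)+1)^k := by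
          apply mul_le_mul h5 h4 (by positivity) (by positivity)
      _ ≤ 2^k * (Real.exp 1 ^ k * (Nat.factorial k : ℝ)) := by
          exact mul_le_mul_of_nonneg_left (succ_pow_le k) (by positivity)
      _ = (Nat.factorial k : ℝ) * (2*Real.exp 1)^k := by rw [mul_pow]; ring

lemma fact_le_nat (n : ℕ) : Nat.factorial n ≤ (2*n+1)^(n-1) := by
  induction n with
  | zero => simp
  | succ n ih =>
    rcases Nat.eq_zero_or_pos n with h | h
    · subst h; simp
    · have h1 : Nat.factorial (n+1) = (n+1) * Nat.factorial n := rfl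
      have h2 : (n+1) * Nat.factorial n ≤ (n+1) * (2*n+1)^(n-1) :=
        Nat.mul_le_mul_left _ ih
      have h3 : (n+1) * (2*n+1)^(n-1) ≤ (2*(n+1)+1) * (2*(n+1)+1)^(n-1) := by
        apply Nat.mul_le_mul (by omega)
        exact Nat.pow_le_pow_left (by omega) _
      have h4 : (2*(n+1)+1) * (2*(n+1)+1)^(n-1) = (2*(n+1)+1)^(n-1+1) := by
        rw [pow_succ]; ring
      have h5 : n - 1 + 1 = n := Nat.succ_pred_eq_of_pos h
      have h6 : (n+1) - 1 = n := rfl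
      rw [h1, h6]
      calc (n+1) * Nat.factorial n ≤ (2*(n+1)+1)^(n-1+1) := le_trans h2 (le_trans h3 (le_of_eq h4))
        _ = (2*(n+1)+1)^n := by rw [h5]

lemma fact_le_c (n : ℕ) : (Nat.factorial n : ℝ) ≤ (2*(n:ℝ)+1) ^ ((n:ℝ)-1) := by
  rcases Nat.eq_zero_or_pos n with h | h
  · subst h; simp
  · have hcast : ((n:ℝ)-1) = ((n-1:ℕ):ℝ) := by push_cast [Nat.cast_sub h]; ring
    rw [hcast, Real.rpow_natCast]
    have := fact_le_nat n
    calc (Nat.factorial n : ℝ) ≤ (((2*n+1)^(n-1) : ℕ) : ℝ) := by exact_mod_cast this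
      _ = (2*(n:ℝ)+1)^(n-1:ℕ) := by push_cast; ring_nf

lemma fact_le_c2 (n : ℕ) : (Nat.factorial n : ℝ) ≤ (2*((n:ℝ)+2)+1) ^ (n+1 : ℕ) := by
  have hnat : Nat.factorial n ≤ (2*n+5)^(n+1) := by
    calc Nat.factorial n ≤ (2*n+1)^(n-1) := fact_le_nat n
      _ ≤ (2*n+5)^(n-1) := Nat.pow_le_pow_left (by omega) _
      _ ≤ (2*n+5)^(n+1) := Nat.pow_le_pow_right (by omega) (by omega)
  calc (Nat.factorial n : ℝ) ≤ (((2*n+5)^(n+1) : ℕ) : ℝ) := by exact_mod_cast hnat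
    _ = (2*((n:ℝ)+2)+1) ^ (n+1 : ℕ) := by push_cast; ring

lemma geom_le (n : ℕ) : ∑ k ∈ Finset.range n, ((2:ℝ)⁻¹)^k ≤ 2 := by
  have := geom_sum_eq (show ((2:ℝ)⁻¹) ≠ 1 by norm_num) n
  rw [this]
  have h1 : (0:ℝ) ≤ ((2:ℝ)⁻¹)^n := by positivity
  have h2 : ((2:ℝ)⁻¹) - 1 = -(1/2) := by norm_num
  rw [h2]
  have : ((2:ℝ)⁻¹)^n - 1 ≤ 0 := by
    have : ((2:ℝ)⁻¹)^n ≤ 1 := pow_le_one₀ (by norm_num) (by norm_num)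
    linarith
  calc (((2:ℝ)⁻¹)^n - 1)/(-(1/2)) = (1 - ((2:ℝ)⁻¹)^n) * 2 := by ring
    _ ≤ 2 := by nlinarith


lemma exists_dyadic {x : ℝ} (h0 : 0 < x) (h1 : x < 1) :
    ∃ i : ℕ, (1/2:ℝ)^(i+1) ≤ x ∧ x < (1/2:ℝ)^i := by
  obtain ⟨n, hn⟩ := exists_pow_lt_of_lt_one h0 (by norm_num : (1/2:ℝ) < 1)
  have hex : ∃ m : ℕ, (1/2:ℝ)^m ≤ x := ⟨n, hn.le⟩
  classical
  let m := Nat.find hex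
  have hm : (1/2:ℝ)^m ≤ x := Nat.find_spec hex
  have hm0 : m ≠ 0 := by
    intro h
    have := hm
    rw [h, pow_zero] at this
    linarith
  refine ⟨m - 1, ?_, ?_⟩
  · have h' : m - 1 + 1 = m := Nat.succ_pred_eq_of_pos (Nat.pos_of_ne_zero hm0)
    rw [h']
    exact hm
  · have := Nat.find_min hex (m := m - 1) (Nat.pred_lt hm0)
    linarith [not_le.mp this]

lemma singular_bound :
    ∫⁻ η : E3 in ball 0 1, (ENNReal.ofReal (‖η‖^2))⁻¹ ∂volume
      ≤ 8 * volume (ball (0:E3) 1) := by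
  set f : E3 → ℝ≥0∞ := fun η => (ENNReal.ofReal (‖η‖^2))⁻¹ with hf
  set S : ℕ → Set E3 := fun i => {η | (1/2:ℝ)^(i+1) ≤ ‖η‖ ∧ ‖η‖ < (1/2:ℝ)^i} with hS
  have hSmeas : ∀ i, MeasurableSet (S i) := by
    intro i
    have : S i = (fun η : E3 => ‖η‖) ⁻¹' (Set.Ico ((1/2:ℝ)^(i+1)) ((1/2:ℝ)^i)) := rfl
    rw [this]
    exact measurable_norm measurableSet_Ico
  have hcover : ball (0:E3) 1 ⊆ {0} ∪ ⋃ i, S i := by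
    intro η hη
    rcases eq_or_ne η 0 with h | h
    · exact Or.inl h
    · right
      have h0 : 0 < ‖η‖ := norm_pos_iff.mpr h
      have h1 : ‖η‖ < 1 := by simpa [dist_eq_norm] using hη
      obtain ⟨i, hi1, hi2⟩ := exists_dyadic h0 h1
      exact Set.mem_iUnion.mpr ⟨i, hi1, hi2⟩
  calc ∫⁻ η in ball 0 1, f η ∂volume
      ≤ ∫⁻ η in ({0} ∪ ⋃ i, S i : Set E3), f η ∂volume := lintegral_mono_set hcover
    _ ≤ ∫⁻ η in ({0} : Set E3), f η ∂volume + ∫⁻ η in (⋃ i, S i), f η ∂volume :=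
        lintegral_union_le _ _ _
    _ ≤ 0 + ∑' i, ∫⁻ η in S i, f η ∂volume := by
        gcongr
        · rw [setLIntegral_measure_zero _ _ (measure_singleton _)]
        · exact lintegral_iUnion_le _ _
    _ ≤ 0 + ∑' i : ℕ, (ENNReal.ofReal ((4:ℝ)^(i+1)) * volume (ball (0:E3) ((1/2:ℝ)^i))) := by
        gcongr with i
        have hb : ∀ η ∈ S i, f η ≤ ENNReal.ofReal ((4:ℝ)^(i+1)) := by
          intro η hη
          have h1 : (1/2:ℝ)^(i+1) ≤ ‖η‖ := hη.1
          have hpow : (0:ℝ) < (1/2:ℝ)^(i+1) := by positivity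
          have hsq : ((1/2:ℝ)^(i+1))^2 ≤ ‖η‖^2 := by
            apply pow_le_pow_left₀ hpow.le h1
          have : f η ≤ (ENNReal.ofReal (((1/2:ℝ)^(i+1))^2))⁻¹ := by
            rw [hf]
            exact ENNReal.inv_le_inv' (ENNReal.ofReal_le_ofReal hsq)
          refine this.trans ?_
          rw [← ENNReal.ofReal_inv_of_pos (by positivity)]
          apply ENNReal.ofReal_le_ofReal
          rw [show (((1/2:ℝ)^(i+1))^2)⁻¹ = (4:ℝ)^(i+1) by
            rw [← pow_mul, one_div, ← inv_pow, inv_inv, pow_mul, ← pow_mul, mul_comm (i+1) 2, pow_mul]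
            norm_num]
        calc ∫⁻ η in S i, f η ∂volume
            ≤ ∫⁻ _ in S i, ENNReal.ofReal ((4:ℝ)^(i+1)) ∂volume :=
              setLIntegral_mono measurable_const hb
          _ = ENNReal.ofReal ((4:ℝ)^(i+1)) * volume (S i) := setLIntegral_const _ _
          _ ≤ ENNReal.ofReal ((4:ℝ)^(i+1)) * volume (ball (0:E3) ((1/2:ℝ)^i)) := by
              gcongr
              intro η hη
              simpa [mem_ball, dist_eq_norm] using hη.2
    _ = ∑' i : ℕ, (ENNReal.ofReal ((4:ℝ)^(i+1)) * volume (ball (0:E3) ((1/2:ℝ)^i))) := by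
        rw [zero_add]
    _ ≤ 8 * volume (ball (0:E3) 1) := by
        have hball : ∀ i : ℕ, volume (ball (0:E3) ((1/2:ℝ)^i))
            = ENNReal.ofReal (((1/2:ℝ)^i)^(3:ℕ)) * volume (ball (0:E3) 1) := by
          intro i
          have := Measure.addHaar_ball (volume : Measure E3) (0:E3)
            (by positivity : (0:ℝ) ≤ (1/2:ℝ)^i)
          simpa [finrank_euclideanSpace_fin] using this
        have hterm : ∀ i : ℕ, ENNReal.ofReal ((4:ℝ)^(i+1)) * ENNReal.ofReal (((1/2:ℝ)^i)^(3:ℕ))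
            = ENNReal.ofReal 4 * (ENNReal.ofReal (1/2))^i := by
          intro i
          rw [← ENNReal.ofReal_pow (by norm_num), ← ENNReal.ofReal_mul (by positivity),
            ← ENNReal.ofReal_mul (by norm_num)]
          congr 1
          rw [show ((1/2:ℝ)^i)^(3:ℕ) = ((1/8:ℝ))^i by
            rw [← pow_mul, mul_comm, pow_mul]; norm_num]
          rw [pow_succ, mul_comm ((4:ℝ)^i) 4, mul_assoc, ← mul_pow]
          norm_num
        calc ∑' i : ℕ, (ENNReal.ofReal ((4:ℝ)^(i+1)) * volume (ball (0:E3) ((1/2:ℝ)^i)))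
            = ∑' i : ℕ, (ENNReal.ofReal 4 * (ENNReal.ofReal (1/2))^i) * volume (ball (0:E3) 1) := by
              congr 1; funext i; rw [hball i, ← mul_assoc, hterm i]
          _ = (ENNReal.ofReal 4 * ∑' i : ℕ, (ENNReal.ofReal (1/2))^i) * volume (ball (0:E3) 1) := by
              rw [ENNReal.tsum_mul_right, ENNReal.tsum_mul_left]
          _ ≤ 8 * volume (ball (0:E3) 1) := by
              gcongr
              rw [ENNReal.tsum_geometric]
              have : ENNReal.ofReal (1/2) = (2:ℝ≥0∞)⁻¹ := by
                rw [show (1/2:ℝ) = (2:ℝ)⁻¹ by norm_num,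
                  ENNReal.ofReal_inv_of_pos (by norm_num)]
                norm_num
              rw [this]
              rw [show (1:ℝ≥0∞) - 2⁻¹ = 2⁻¹ by
                rw [ENNReal.sub_eq_of_eq_add (by norm_num)]
                rw [ENNReal.inv_two_add_inv_two]]
              rw [inv_inv, ENNReal.ofReal_ofNat]
              norm_num

lemma ofReal_int_le {α : Type*} [MeasurableSpace α] (μ : Measure α) (f : α → ℝ)
    (h : ∀ x, 0 ≤ f x) :
    ENNReal.ofReal (∫ x, f x ∂μ) ≤ ∫⁻ x, ENNReal.ofReal (f x) ∂μ := by
  calc ENNReal.ofReal (∫ x, f x ∂μ) = ‖∫ x, f x ∂μ‖ₑ :=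
        (Real.enorm_eq_ofReal (integral_nonneg h)).symm
    _ ≤ ∫⁻ x, ‖f x‖ₑ ∂μ := enorm_integral_le_lintegral_enorm _
    _ = ∫⁻ x, ENNReal.ofReal (f x) ∂μ :=
        lintegral_congr fun x => Real.enorm_eq_ofReal (h x)

lemma lint_shift (u : E3 → ℝ≥0∞) (ξ : E3) :
    ∫⁻ η, u (ξ - η) = ∫⁻ η, u η := by
  conv_rhs => rw [← Measure.map_sub_left_eq_self (volume : Measure E3) ξ]
  exact (lintegral_map_equiv u (MeasurableEquiv.subLeft ξ)).symm

lemma ae_shift {P : E3 → Prop} (h : ∀ᵐ ζ ∂(volume : Measure E3), P ζ) (ξ : E3) :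
    ∀ᵐ η ∂(volume : Measure E3), P (ξ - η) := by
  have h2 : {x : E3 | P x} ∈ Filter.map (fun η : E3 => ξ - η) (ae (volume : Measure E3)) := by
    rw [Measure.map_sub_left_ae]
    exact h
  exact Filter.mem_map.mp h2

lemma ae_ofReal_le_eLpNormTop (v : E3 → ℝ) (hv : ∀ x, 0 ≤ v x) :
    ∀ᵐ η : E3 ∂volume, ENNReal.ofReal (v η) ≤ eLpNorm v ⊤ volume := by
  rw [eLpNorm_exponent_top, eLpNormEssSup]
  filter_upwards [ae_le_essSup (f := fun η : E3 => ‖v η‖ₑ)] with η hη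
  rwa [Real.enorm_eq_ofReal (hv η)] at hη

lemma eLpNormTop_le (v : E3 → ℝ) (hv : ∀ x, 0 ≤ v x) (C : ℝ≥0∞)
    (h : ∀ᵐ η : E3 ∂volume, ENNReal.ofReal (v η) ≤ C) : eLpNorm v ⊤ volume ≤ C := by
  rw [eLpNorm_exponent_top, eLpNormEssSup]
  refine le_trans (essSup_mono_ae ?_) (le_of_eq (essSup_const _ (NeZero.ne _)))
  filter_upwards [h] with η hη
  rwa [Real.enorm_eq_ofReal (hv η)]

lemma lint_mul_essSup_le (Φ : E3 → ℝ≥0∞) (hΦ : Measurable Φ) (v : E3 → ℝ)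
    (hv : ∀ x, 0 ≤ v x) :
    ∫⁻ η, Φ η * ENNReal.ofReal (v η) ≤ (∫⁻ η, Φ η) * eLpNorm v ⊤ volume := by
  calc ∫⁻ η, Φ η * ENNReal.ofReal (v η)
      ≤ ∫⁻ η, Φ η * eLpNorm v ⊤ volume := by
        refine lintegral_mono_ae ?_
        filter_upwards [ae_ofReal_le_eLpNormTop v hv] with η h
        exact mul_le_mul_right h _
    _ = (∫⁻ η, Φ η) * eLpNorm v ⊤ volume := lintegral_mul_const _ hΦ

lemma eLpNorm_one_of_nonneg (v : E3 → ℝ) (hv : ∀ x, 0 ≤ v x) :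
    eLpNorm v 1 volume = ∫⁻ η, ENNReal.ofReal (v η) := by
  rw [eLpNorm_one_eq_lintegral_enorm]
  exact lintegral_congr fun x => Real.enorm_eq_ofReal (hv x)

/-- The shifted kernel has the same `L¹` bound. -/
lemma lint_kernel_le (u : E3 → ℝ) (hupos : ∀ x, 0 ≤ u x) (k : ℕ) (Ak : ℝ)
    (huk : eLpNorm (fun η : E3 => ‖η‖^k * u η) 1 volume ≤ ENNReal.ofReal Ak) (ξ : E3) :
    ∫⁻ η, ENNReal.ofReal (‖ξ - η‖^k * u (ξ - η)) ≤ ENNReal.ofReal Ak := by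
  rw [lint_shift (fun η => ENNReal.ofReal (‖η‖^k * u η)) ξ]
  rw [← eLpNorm_one_of_nonneg (fun η => ‖η‖^k * u η)
    (fun η => mul_nonneg (by positivity) (hupos η))]
  exact huk

/-- Pointwise binomial expansion bound. -/
lemma pointwise_binom (u v : E3 → ℝ) (hupos : ∀ x, 0 ≤ u x) (hvpos : ∀ x, 0 ≤ v x)
    (n : ℕ) (ξ η : E3) :
    ENNReal.ofReal (‖ξ‖^n) * ENNReal.ofReal (u (ξ - η) * v η) ≤
      ∑ k ∈ Finset.range (n+1), (n.choose k : ℝ≥0∞) *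
        ENNReal.ofReal (‖ξ - η‖^k * u (ξ - η)) * ENNReal.ofReal (‖η‖^(n-k) * v η) := by
  have hnorm : ‖ξ‖^n ≤ ∑ k ∈ Finset.range (n+1), ‖ξ - η‖^k * ‖η‖^(n-k) * (n.choose k : ℝ) := by
    have h1 : ‖ξ‖ ≤ ‖ξ - η‖ + ‖η‖ := by
      calc ‖ξ‖ = ‖(ξ - η) + η‖ := by rw [sub_add_cancel]
        _ ≤ ‖ξ - η‖ + ‖η‖ := norm_add_le _ _
    calc ‖ξ‖^n ≤ (‖ξ - η‖ + ‖η‖)^n := pow_le_pow_left₀ (norm_nonneg _) h1 n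
      _ = ∑ k ∈ Finset.range (n+1), ‖ξ - η‖^k * ‖η‖^(n-k) * (n.choose k : ℝ) := add_pow _ _ _
  have hreal : ‖ξ‖^n * (u (ξ - η) * v η) ≤
      ∑ k ∈ Finset.range (n+1),
        (n.choose k : ℝ) * (‖ξ - η‖^k * u (ξ - η)) * (‖η‖^(n-k) * v η) := by
    have huv : 0 ≤ u (ξ - η) * v η := mul_nonneg (hupos _) (hvpos _)
    calc ‖ξ‖^n * (u (ξ - η) * v η)
        ≤ (∑ k ∈ Finset.range (n+1), ‖ξ - η‖^k * ‖η‖^(n-k) * (n.choose k : ℝ)) *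
            (u (ξ - η) * v η) := mul_le_mul_of_nonneg_right hnorm huv
      _ = ∑ k ∈ Finset.range (n+1),
            (n.choose k : ℝ) * (‖ξ - η‖^k * u (ξ - η)) * (‖η‖^(n-k) * v η) := by
          rw [Finset.sum_mul]
          exact Finset.sum_congr rfl fun k _ => by ring
  calc ENNReal.ofReal (‖ξ‖^n) * ENNReal.ofReal (u (ξ - η) * v η)
      = ENNReal.ofReal (‖ξ‖^n * (u (ξ - η) * v η)) := by
        rw [← ENNReal.ofReal_mul (by positivity)]
    _ ≤ ENNReal.ofReal (∑ k ∈ Finset.range (n+1),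
          (n.choose k : ℝ) * (‖ξ - η‖^k * u (ξ - η)) * (‖η‖^(n-k) * v η)) :=
        ENNReal.ofReal_le_ofReal hreal
    _ = ∑ k ∈ Finset.range (n+1), ENNReal.ofReal
          ((n.choose k : ℝ) * (‖ξ - η‖^k * u (ξ - η)) * (‖η‖^(n-k) * v η)) := by
        rw [ENNReal.ofReal_sum_of_nonneg]
        intro k _
        have h1 := hupos (ξ - η); have h2 := hvpos η
        have : (0:ℝ) ≤ ‖ξ - η‖^k * u (ξ - η) := mul_nonneg (by positivity) h1
        have : (0:ℝ) ≤ ‖η‖^(n-k) * v η := mul_nonneg (by positivity) h2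
        positivity
    _ = ∑ k ∈ Finset.range (n+1), (n.choose k : ℝ≥0∞) *
          ENNReal.ofReal (‖ξ - η‖^k * u (ξ - η)) * ENNReal.ofReal (‖η‖^(n-k) * v η) := by
        refine Finset.sum_congr rfl fun k _ => ?_
        have h1 := hupos (ξ - η); have h2 := hvpos η
        have e1 : (0:ℝ) ≤ (n.choose k : ℝ) * (‖ξ - η‖^k * u (ξ - η)) :=
          mul_nonneg (by positivity) (mul_nonneg (by positivity) h1)
        rw [ENNReal.ofReal_mul e1, ENNReal.ofReal_mul (by positivity : (0:ℝ) ≤ (n.choose k : ℝ)),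
          ENNReal.ofReal_natCast]

/-- Main expansion of a convolution against the moment weights. -/
lemma conv_expand (u v : E3 → ℝ) (hu : Measurable u) (hupos : ∀ x, 0 ≤ u x)
    (hv : AEMeasurable v (volume : Measure E3)) (hvpos : ∀ x, 0 ≤ v x) (n : ℕ) (ξ : E3) :
    ENNReal.ofReal (‖ξ‖^n) * ENNReal.ofReal (conv u v ξ) ≤
      ∑ k ∈ Finset.range (n+1), (n.choose k : ℝ≥0∞) *
        ∫⁻ η, ENNReal.ofReal (‖ξ - η‖^k * u (ξ - η)) * ENNReal.ofReal (‖η‖^(n-k) * v η) := by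
  calc ENNReal.ofReal (‖ξ‖^n) * ENNReal.ofReal (conv u v ξ)
      ≤ ENNReal.ofReal (‖ξ‖^n) * ∫⁻ η, ENNReal.ofReal (u (ξ - η) * v η) := by
        exact mul_le_mul_right (ofReal_int_le volume _
          (fun η => mul_nonneg (hupos _) (hvpos _))) _
    _ = ∫⁻ η, ENNReal.ofReal (‖ξ‖^n) * ENNReal.ofReal (u (ξ - η) * v η) :=
        (lintegral_const_mul' _ _ ENNReal.ofReal_ne_top).symm
    _ ≤ ∫⁻ η, ∑ k ∈ Finset.range (n+1), (n.choose k : ℝ≥0∞) *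
          ENNReal.ofReal (‖ξ - η‖^k * u (ξ - η)) * ENNReal.ofReal (‖η‖^(n-k) * v η) :=
        lintegral_mono fun η => pointwise_binom u v hupos hvpos n ξ η
    _ = ∑ k ∈ Finset.range (n+1), ∫⁻ η, (n.choose k : ℝ≥0∞) *
          ENNReal.ofReal (‖ξ - η‖^k * u (ξ - η)) * ENNReal.ofReal (‖η‖^(n-k) * v η) := by
        refine lintegral_finset_sum' _ fun k _ => ?_
        have m1 : Measurable fun η : E3 => ξ - η := measurable_const.sub measurable_id
        have m2 : Measurable fun η : E3 => ENNReal.ofReal (‖ξ - η‖^k * u (ξ - η)) :=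
          (((measurable_norm.comp m1).pow_const k).mul (hu.comp m1)).ennreal_ofReal
        have m3 : AEMeasurable (fun η : E3 => ENNReal.ofReal (‖η‖^(n-k) * v η)) volume :=
          ENNReal.measurable_ofReal.comp_aemeasurable
            (((measurable_norm.pow_const (n-k)).aemeasurable).mul hv)
        exact ((m2.const_mul _).aemeasurable.mul m3)
    _ = ∑ k ∈ Finset.range (n+1), (n.choose k : ℝ≥0∞) *
          ∫⁻ η, ENNReal.ofReal (‖ξ - η‖^k * u (ξ - η)) * ENNReal.ofReal (‖η‖^(n-k) * v η) := by
        refine Finset.sum_congr rfl fun k _ => ?_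
        rw [← lintegral_const_mul' _ _ (by simp : (n.choose k : ℝ≥0∞) ≠ ⊤)]
        exact lintegral_congr fun η => by ring

lemma kernel_meas (u : E3 → ℝ) (hu : Measurable u) (k : ℕ) (ξ : E3) :
    Measurable fun η : E3 => ENNReal.ofReal (‖ξ - η‖^k * u (ξ - η)) := by
  have m1 : Measurable fun η : E3 => ξ - η := measurable_const.sub measurable_id
  exact (((measurable_norm.comp m1).pow_const k).mul (hu.comp m1)).ennreal_ofReal

lemma termA (u v : E3 → ℝ) (hu : Measurable u) (hupos : ∀ x, 0 ≤ u x)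
    (hvpos : ∀ x, 0 ≤ v x) (k j : ℕ) (Ak : ℝ)
    (huk : eLpNorm (fun η : E3 => ‖η‖^k * u η) 1 volume ≤ ENNReal.ofReal Ak) (ξ : E3) :
    ∫⁻ η, ENNReal.ofReal (‖ξ - η‖^k * u (ξ - η)) * ENNReal.ofReal (‖η‖^j * v η) ≤
      ENNReal.ofReal Ak * eLpNorm (fun η : E3 => ‖η‖^j * v η) ⊤ volume := by
  calc ∫⁻ η, ENNReal.ofReal (‖ξ - η‖^k * u (ξ - η)) * ENNReal.ofReal (‖η‖^j * v η)
      ≤ (∫⁻ η, ENNReal.ofReal (‖ξ - η‖^k * u (ξ - η))) *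
          eLpNorm (fun η : E3 => ‖η‖^j * v η) ⊤ volume :=
        lint_mul_essSup_le _ (kernel_meas u hu k ξ) _
          (fun η => mul_nonneg (by positivity) (hvpos η))
    _ ≤ ENNReal.ofReal Ak * eLpNorm (fun η : E3 => ‖η‖^j * v η) ⊤ volume :=
        mul_le_mul_left (lint_kernel_le u hupos k Ak huk ξ) _

lemma near_term (V g : E3 → ℝ) (hVm : Measurable V) (hVpos : ∀ x, 0 ≤ V x)
    (hgpos : ∀ x, 0 ≤ g x) (k j : ℕ) (hj : j ≤ 1) (Ak Kr Ir : ℝ)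
    (hA : 0 ≤ Ak) (hK : 0 ≤ Kr) (hIr0 : 0 ≤ Ir)
    (huk1 : eLpNorm (fun η : E3 => ‖η‖^k * V η) 1 volume ≤ ENNReal.ofReal Ak)
    (hukinf : eLpNorm (fun η : E3 => ‖η‖^k * V η) ⊤ volume ≤ ENNReal.ofReal Ak)
    (hgK : ∀ᵐ η : E3 ∂volume, ENNReal.ofReal (‖η‖^2 * g η) ≤ ENNReal.ofReal Kr)
    (hIr : ∫⁻ η : E3 in ball 0 1, (ENNReal.ofReal (‖η‖^2))⁻¹ ∂volume ≤ ENNReal.ofReal Ir)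
    (ξ : E3) :
    ∫⁻ η, ENNReal.ofReal (‖ξ - η‖^k * V (ξ - η)) * ENNReal.ofReal (‖η‖^j * g η) ≤
      ENNReal.ofReal (Ak * Kr * (Ir + 1)) := by
  set Φ : E3 → ℝ≥0∞ := fun η => ENNReal.ofReal (‖ξ - η‖^k * V (ξ - η)) with hΦdef
  set X : E3 → ℝ≥0∞ := fun η => ENNReal.ofReal (‖η‖^j * g η) with hXdef
  have hΦm : Measurable Φ := kernel_meas V hVm k ξ
  have hΦae : ∀ᵐ η : E3 ∂volume, Φ η ≤ ENNReal.ofReal Ak := by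
    have h0 : ∀ᵐ ζ : E3 ∂volume, ENNReal.ofReal (‖ζ‖^k * V ζ) ≤ ENNReal.ofReal Ak := by
      filter_upwards [ae_ofReal_le_eLpNormTop (fun ζ : E3 => ‖ζ‖^k * V ζ)
        (fun ζ => mul_nonneg (by positivity) (hVpos ζ))] with ζ hζ
      exact hζ.trans hukinf
    exact ae_shift h0 ξ
  have hne : ∀ᵐ η : E3 ∂volume, η ≠ 0 := by
    rw [ae_iff]
    simp only [ne_eq, not_not, Set.setOf_eq_eq_singleton]
    exact measure_singleton 0
  have hsplit :
      ∫⁻ η, Φ η * X η =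
        (∫⁻ η in ball (0:E3) 1, Φ η * X η ∂volume) +
          ∫⁻ η in (ball (0:E3) 1)ᶜ, Φ η * X η ∂volume :=
    (lintegral_add_compl _ measurableSet_ball).symm
  have hball : (∫⁻ η in ball (0:E3) 1, Φ η * X η ∂volume) ≤
      ENNReal.ofReal Ak * ENNReal.ofReal Kr * ENNReal.ofReal Ir := by
    have hptwise : ∀ᵐ η ∂(volume.restrict (ball (0:E3) 1)),
        Φ η * X η ≤ ENNReal.ofReal Ak * ENNReal.ofReal Kr * (ENNReal.ofReal (‖η‖^2))⁻¹ := by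
      filter_upwards [ae_restrict_of_ae hΦae, ae_restrict_of_ae hgK, ae_restrict_of_ae hne,
        ae_restrict_mem measurableSet_ball] with η h1 h2 h3 h4
      have hn1 : ‖η‖ < 1 := by simpa [dist_eq_norm] using h4
      have hn0 : 0 < ‖η‖ := norm_pos_iff.mpr h3
      have hXb : X η ≤ ENNReal.ofReal Kr * (ENNReal.ofReal (‖η‖^2))⁻¹ := by
        have hmul : X η * ENNReal.ofReal (‖η‖^2) ≤ ENNReal.ofReal Kr := by
          rw [hXdef]
          rw [← ENNReal.ofReal_mul (mul_nonneg (by positivity) (hgpos η))]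
          refine le_trans (ENNReal.ofReal_le_ofReal ?_) h2
          have hpow : ‖η‖^j ≤ 1 := pow_le_one₀ hn0.le hn1.le
          calc ‖η‖^j * g η * ‖η‖^2 = ‖η‖^j * (‖η‖^2 * g η) := by ring
            _ ≤ 1 * (‖η‖^2 * g η) :=
              mul_le_mul_of_nonneg_right hpow (mul_nonneg (by positivity) (hgpos η))
            _ = ‖η‖^2 * g η := one_mul _
        have hc0 : ENNReal.ofReal (‖η‖^2) ≠ 0 := by
          simp only [ne_eq, ENNReal.ofReal_eq_zero, not_le]
          positivity
        rw [← div_eq_mul_inv,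
          ENNReal.le_div_iff_mul_le (Or.inl hc0) (Or.inl ENNReal.ofReal_ne_top)]
        exact hmul
      calc Φ η * X η ≤ ENNReal.ofReal Ak * (ENNReal.ofReal Kr * (ENNReal.ofReal (‖η‖^2))⁻¹) :=
            mul_le_mul' h1 hXb
        _ = ENNReal.ofReal Ak * ENNReal.ofReal Kr * (ENNReal.ofReal (‖η‖^2))⁻¹ := by
            rw [mul_assoc]
    calc (∫⁻ η in ball (0:E3) 1, Φ η * X η ∂volume)
        ≤ ∫⁻ η in ball (0:E3) 1,
            ENNReal.ofReal Ak * ENNReal.ofReal Kr * (ENNReal.ofReal (‖η‖^2))⁻¹ ∂volume :=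
          lintegral_mono_ae hptwise
      _ = ENNReal.ofReal Ak * ENNReal.ofReal Kr *
            ∫⁻ η in ball (0:E3) 1, (ENNReal.ofReal (‖η‖^2))⁻¹ ∂volume := by
          rw [lintegral_const_mul' _ _ (by
            exact ENNReal.mul_ne_top ENNReal.ofReal_ne_top ENNReal.ofReal_ne_top)]
      _ ≤ ENNReal.ofReal Ak * ENNReal.ofReal Kr * ENNReal.ofReal Ir :=
          mul_le_mul_right hIr _
  have hcompl : (∫⁻ η in (ball (0:E3) 1)ᶜ, Φ η * X η ∂volume) ≤
      ENNReal.ofReal Ak * ENNReal.ofReal Kr := by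
    have hptwise : ∀ᵐ η ∂(volume.restrict (ball (0:E3) 1)ᶜ),
        Φ η * X η ≤ Φ η * ENNReal.ofReal Kr := by
      filter_upwards [ae_restrict_of_ae hgK,
        ae_restrict_mem measurableSet_ball.compl] with η h2 h4
      have hn1 : 1 ≤ ‖η‖ := by
        simp only [Set.mem_compl_iff, mem_ball, dist_eq_norm, sub_zero, not_lt] at h4
        exact h4
      refine mul_le_mul_right ?_ _
      refine le_trans (ENNReal.ofReal_le_ofReal ?_) h2
      have : ‖η‖^j ≤ ‖η‖^2 := pow_le_pow_right₀ hn1 (by omega)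
      exact mul_le_mul_of_nonneg_right this (hgpos η)
    calc (∫⁻ η in (ball (0:E3) 1)ᶜ, Φ η * X η ∂volume)
        ≤ ∫⁻ η in (ball (0:E3) 1)ᶜ, Φ η * ENNReal.ofReal Kr ∂volume :=
          lintegral_mono_ae hptwise
      _ = (∫⁻ η in (ball (0:E3) 1)ᶜ, Φ η ∂volume) * ENNReal.ofReal Kr :=
          lintegral_mul_const _ hΦm
      _ ≤ (∫⁻ η, Φ η) * ENNReal.ofReal Kr :=
          mul_le_mul_left (setLIntegral_le_lintegral _ _) _
      _ ≤ ENNReal.ofReal Ak * ENNReal.ofReal Kr :=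
          mul_le_mul_left (lint_kernel_le V hVpos k Ak huk1 ξ) _
  calc ∫⁻ η, Φ η * X η
      ≤ ENNReal.ofReal Ak * ENNReal.ofReal Kr * ENNReal.ofReal Ir +
          ENNReal.ofReal Ak * ENNReal.ofReal Kr := by
        rw [hsplit]; exact add_le_add hball hcompl
    _ = ENNReal.ofReal (Ak * Kr * (Ir + 1)) := by
        rw [← ENNReal.ofReal_mul hA, ← ENNReal.ofReal_mul (mul_nonneg hA hK),
          ← ENNReal.ofReal_add (by positivity) (mul_nonneg hA hK)]
        congr 1
        ring

lemma enn_sum_le (n : ℕ) (t : ℕ → ℝ≥0∞) (r : ℕ → ℝ) (hr : ∀ k, 0 ≤ r k)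
    (h : ∀ k ∈ Finset.range (n+1), t k ≤ ENNReal.ofReal (r k)) (R : ℝ)
    (hR : ∑ k ∈ Finset.range (n+1), r k ≤ R) :
    ∑ k ∈ Finset.range (n+1), t k ≤ ENNReal.ofReal R := by
  calc ∑ k ∈ Finset.range (n+1), t k ≤ ∑ k ∈ Finset.range (n+1), ENNReal.ofReal (r k) :=
        Finset.sum_le_sum h
    _ = ENNReal.ofReal (∑ k ∈ Finset.range (n+1), r k) :=
        (ENNReal.ofReal_sum_of_nonneg (fun k _ => hr k)).symm
    _ ≤ ENNReal.ofReal R := ENNReal.ofReal_le_ofReal hR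

lemma enn_term_le (c x y : ℝ) (hc : 0 ≤ c) (hx : 0 ≤ x) (T : ℝ≥0∞)
    (hT : T ≤ ENNReal.ofReal y) :
    (ENNReal.ofReal c) * (ENNReal.ofReal x * T) ≤ ENNReal.ofReal (c * (x * y)) := by
  calc (ENNReal.ofReal c) * (ENNReal.ofReal x * T)
      ≤ (ENNReal.ofReal c) * (ENNReal.ofReal x * ENNReal.ofReal y) := by gcongr
    _ = ENNReal.ofReal (c * (x * y)) := by
        rw [← ENNReal.ofReal_mul hx, ← ENNReal.ofReal_mul hc]

/-- The key summation estimate. -/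
lemma sum_bound (a β s : ℝ) (ha : 0 ≤ a) (hs1 : 1 ≤ s) (hβ : 0 ≤ β) (h2β : 2*β ≤ s)
    (n : ℕ) (D : ℝ) (hD : 0 ≤ D) (u : ℕ → ℝ) (hu : ∀ j, 0 ≤ u j)
    (hub : ∀ j, j ≤ n → u j ≤ D * s^j * (Nat.factorial j)) :
    ∑ k ∈ Finset.range (n+1), (n.choose k : ℝ) * (a * (Nat.factorial k) * β^k) * u (n-k)
      ≤ 2 * a * D * s^n * (Nat.factorial n) := by
  have hs0 : (0:ℝ) < s := lt_of_lt_of_le one_pos hs1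
  have hterm : ∀ k ∈ Finset.range (n+1),
      (n.choose k : ℝ) * (a * (Nat.factorial k) * β^k) * u (n-k)
        ≤ (a * D * s^n * (Nat.factorial n)) * (2⁻¹:ℝ)^k := by
    intro k hk
    have hkn : k ≤ n := Nat.lt_succ_iff.mp (Finset.mem_range.mp hk)
    have hchoose : (n.choose k : ℝ) * (Nat.factorial k) * (Nat.factorial (n-k))
        = (Nat.factorial n : ℝ) := by
      have := Nat.choose_mul_factorial_mul_factorial hkn
      exact_mod_cast congrArg (fun m : ℕ => (m : ℝ)) this
    have hβk : β^k ≤ (s/2)^k := pow_le_pow_left₀ hβ (by linarith) k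
    have hsplit : (s/2)^k * s^(n-k) = s^n * (2⁻¹:ℝ)^k := by
      rw [div_pow, div_eq_mul_inv, ← inv_pow]
      rw [show s^k * (2:ℝ)⁻¹^k * s^(n-k) = (s^k * s^(n-k)) * (2:ℝ)⁻¹^k by ring,
        ← pow_add, Nat.add_sub_cancel' hkn]
    calc (n.choose k : ℝ) * (a * (Nat.factorial k) * β^k) * u (n-k)
        ≤ (n.choose k : ℝ) * (a * (Nat.factorial k) * β^k) *
            (D * s^(n-k) * (Nat.factorial (n-k))) := by
          apply mul_le_mul_of_nonneg_left (hub (n-k) (Nat.sub_le n k))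
          positivity
      _ = a * D * ((n.choose k : ℝ) * (Nat.factorial k) * (Nat.factorial (n-k)))
            * (β^k * s^(n-k)) := by ring
      _ ≤ a * D * ((n.choose k : ℝ) * (Nat.factorial k) * (Nat.factorial (n-k)))
            * ((s/2)^k * s^(n-k)) := by
          apply mul_le_mul_of_nonneg_left (mul_le_mul_of_nonneg_right hβk (by positivity))
          positivity
      _ = (a * D * s^n * (Nat.factorial n)) * (2⁻¹:ℝ)^k := by
          rw [hchoose, hsplit]; ring
  calc ∑ k ∈ Finset.range (n+1), (n.choose k : ℝ) * (a * (Nat.factorial k) * β^k) * u (n-k)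
      ≤ ∑ k ∈ Finset.range (n+1), (a * D * s^n * (Nat.factorial n)) * (2⁻¹:ℝ)^k :=
        Finset.sum_le_sum hterm
    _ = (a * D * s^n * (Nat.factorial n)) * ∑ k ∈ Finset.range (n+1), (2⁻¹:ℝ)^k := by
        rw [Finset.mul_sum]
    _ ≤ (a * D * s^n * (Nat.factorial n)) * 2 := by
        apply mul_le_mul_of_nonneg_left (geom_le (n+1))
        positivity
    _ = 2 * a * D * s^n * (Nat.factorial n) := by ring

end EFBS

private def Fn (f : E3 → ℝ) (n : ℕ) : ℝ≥0∞ :=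
  eLpNorm (fun ξ : E3 => ‖ξ‖^n * f ξ) ⊤ (volume : Measure E3)


open EFBS

set_option maxHeartbeats 1000000

/-- Lemma 5.3.  If `‖|ξ|ⁿ W‖₁ ≤ a bⁿ (2n+1)^{n-1}` and
`‖|ξ|ⁿ V‖_p ≤ a bⁿ (2n+1)^{n-1}` for all `n` and `p ∈ [1,∞]`, `f ∈ L² ∩ L^∞` and `g ≥ 0`
satisfy `(|ξ|+λ) f ≤ W ∗ f + V ∗ g` and `|ξ|² g ≤ V ∗ f` a.e., then there are `ã, b̃ > 0`
with `‖|ξ|ⁿ f‖_∞ ≤ ã b̃ⁿ (2n+1)^{n-1}` and `‖|ξ|^{n+2} g‖_∞ ≤ ã b̃^{n+2} (2(n+2)+1)^{n+1}`. -/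
theorem exponential_fourier_bound_system
    (W V : E3 → ℝ) (a b : ℝ) (ha : 0 < a) (hb : 0 < b)
    (hWpos : ∀ ξ : E3, 0 ≤ W ξ) (hWmeas : Measurable W)
    (hVpos : ∀ ξ : E3, 0 ≤ V ξ) (hVmeas : Measurable V)
    (hW : ∀ n : ℕ, eLpNorm (fun ξ : E3 => ‖ξ‖^n * W ξ) 1 (volume : Measure E3) ≤
      ENNReal.ofReal (a * b^n * (2*(n:ℝ)+1) ^ ((n:ℝ)-1)))
    (hV : ∀ n : ℕ, ∀ p : ENNReal, 1 ≤ p →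
      eLpNorm (fun ξ : E3 => ‖ξ‖^n * V ξ) p (volume : Measure E3) ≤
        ENNReal.ofReal (a * b^n * (2*(n:ℝ)+1) ^ ((n:ℝ)-1)))
    (lam : ℝ) (hlam : 0 < lam)
    (f g : E3 → ℝ)
    (hf2 : MemLp f 2 (volume : Measure E3)) (hfinf : MemLp f ⊤ (volume : Measure E3))
    (hfpos : ∀ ξ : E3, 0 ≤ f ξ)
    (hgpos : ∀ ξ : E3, 0 ≤ g ξ) (hgmeas : Measurable g)
    (h1 : ∀ᵐ ξ : E3 ∂(volume), (‖ξ‖ + lam) * f ξ ≤ conv W f ξ + conv V g ξ)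
    (h2 : ∀ᵐ ξ : E3 ∂(volume), ‖ξ‖^2 * g ξ ≤ conv V f ξ) :
    ∃ ta tb : ℝ, 0 < ta ∧ 0 < tb ∧ ∀ n : ℕ,
      eLpNorm (fun ξ : E3 => ‖ξ‖^n * f ξ) ⊤ (volume : Measure E3) ≤
        ENNReal.ofReal (ta * tb^n * (2*(n:ℝ)+1) ^ ((n:ℝ)-1)) ∧
      eLpNorm (fun ξ : E3 => ‖ξ‖^(n+2) * g ξ) ⊤ (volume : Measure E3) ≤
        ENNReal.ofReal (ta * tb^(n+2) * (2*((n:ℝ)+2)+1) ^ (n+1 : ℕ)) := by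

  classical
  set Ak : ℕ → ℝ := fun k => a * b^k * (2*(k:ℝ)+1) ^ ((k:ℝ)-1) with hAkdef
  have hAkpos : ∀ k, 0 < Ak k := by
    intro k
    have h0 : (0:ℝ) < (2*(k:ℝ)+1) ^ ((k:ℝ)-1) := Real.rpow_pos_of_pos (by positivity) _
    have : Ak k = a * b^k * (2*(k:ℝ)+1) ^ ((k:ℝ)-1) := rfl
    rw [this]; positivity
  have hfae : AEMeasurable f (volume : Measure E3) := hfinf.1.aemeasurable
  have hVk1 : ∀ k, eLpNorm (fun η : E3 => ‖η‖^k * V η) 1 volume ≤ ENNReal.ofReal (Ak k) :=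
    fun k => hV k 1 le_rfl
  have hVkinf : ∀ k, eLpNorm (fun η : E3 => ‖η‖^k * V η) ⊤ volume ≤ ENNReal.ofReal (Ak k) :=
    fun k => hV k ⊤ le_top
  have hWk : ∀ k, eLpNorm (fun η : E3 => ‖η‖^k * W η) 1 volume ≤ ENNReal.ofReal (Ak k) :=
    fun k => hW k
  -- the constant A
  have hF0top : Fn f 0 < ⊤ := by
    have he : (fun ξ : E3 => ‖ξ‖^0 * f ξ) = f := funext fun ξ => by simp
    have : Fn f 0 = eLpNorm f ⊤ (volume : Measure E3) := by
      show eLpNorm (fun ξ : E3 => ‖ξ‖^0 * f ξ) ⊤ (volume : Measure E3) = _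
      rw [he]
    rw [this]
    exact hfinf.2
  set A : ℝ := max 1 (Fn f 0).toReal with hAdef
  have hA1 : (1:ℝ) ≤ A := le_max_left _ _
  have hApos : (0:ℝ) < A := lt_of_lt_of_le one_pos hA1
  have hF0 : Fn f 0 ≤ ENNReal.ofReal A := by
    rw [← ENNReal.ofReal_toReal hF0top.ne]
    exact ENNReal.ofReal_le_ofReal (le_max_right _ _)
  -- the singular-integral constant
  set Ir : ℝ := (8 * volume (ball (0:E3) 1)).toReal with hIrdef
  have hIr0 : (0:ℝ) ≤ Ir := ENNReal.toReal_nonneg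
  have hIrb : ∫⁻ η : E3 in ball 0 1, (ENNReal.ofReal (‖η‖^2))⁻¹ ∂volume ≤ ENNReal.ofReal Ir := by
    refine le_trans singular_bound ?_
    rw [hIrdef, ENNReal.ofReal_toReal]
    exact ENNReal.mul_ne_top (by norm_num) measure_ball_lt_top.ne
  -- value of `Ak 0`
  have hAk0 : Ak 0 = a := by
    show a * b^(0:ℕ) * (2*((0:ℕ):ℝ)+1) ^ (((0:ℕ):ℝ)-1) = a
    rw [show (2*((0:ℕ):ℝ)+1) = 1 by norm_num, Real.one_rpow, pow_zero]
    ring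
  -- pointwise bound for `conv V f`
  have hconvVf : ∀ η : E3, ENNReal.ofReal (conv V f η) ≤ ENNReal.ofReal (Ak 0) * Fn f 0 := by
    intro η
    calc ENNReal.ofReal (conv V f η)
        ≤ ∫⁻ ζ, ENNReal.ofReal (V (η - ζ) * f ζ) ∂volume :=
          ofReal_int_le volume _ (fun ζ => mul_nonneg (hVpos _) (hfpos _))
      _ = ∫⁻ ζ, ENNReal.ofReal (‖η - ζ‖^(0:ℕ) * V (η - ζ)) *
            ENNReal.ofReal (‖ζ‖^(0:ℕ) * f ζ) ∂volume := by
          refine lintegral_congr fun ζ => ?_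
          rw [pow_zero, pow_zero, one_mul, one_mul, ENNReal.ofReal_mul (hVpos _)]
      _ ≤ ENNReal.ofReal (Ak 0) * Fn f 0 :=
          termA V f hVmeas hVpos hfpos 0 0 (Ak 0) (hVk1 0) η
  -- a.e. bound for `‖η‖² g`
  have hgK : ∀ᵐ η : E3 ∂volume, ENNReal.ofReal (‖η‖^2 * g η) ≤ ENNReal.ofReal (a*A) := by
    filter_upwards [h2] with η hη
    calc ENNReal.ofReal (‖η‖^2 * g η) ≤ ENNReal.ofReal (conv V f η) :=
          ENNReal.ofReal_le_ofReal hη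
      _ ≤ ENNReal.ofReal (Ak 0) * Fn f 0 := hconvVf η
      _ ≤ ENNReal.ofReal a * ENNReal.ofReal A := by
          rw [hAk0]; exact mul_le_mul_right hF0 _
      _ = ENNReal.ofReal (a*A) := (ENNReal.ofReal_mul ha.le).symm
  -- the `G` recursion
  have hGle : ∀ m : ℕ, Fn g (m+2) ≤ ∑ k ∈ Finset.range (m+1),
      (m.choose k : ℝ≥0∞) * (ENNReal.ofReal (Ak k) * Fn f (m-k)) := by
    intro m
    refine eLpNormTop_le _ (fun ξ => mul_nonneg (by positivity) (hgpos ξ)) _ ?_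
    filter_upwards [h2] with ξ hξ
    have e1 : ENNReal.ofReal (‖ξ‖^(m+2) * g ξ) ≤
        ENNReal.ofReal (‖ξ‖^m) * ENNReal.ofReal (conv V f ξ) := by
      rw [← ENNReal.ofReal_mul (by positivity)]
      apply ENNReal.ofReal_le_ofReal
      calc ‖ξ‖^(m+2) * g ξ = ‖ξ‖^m * (‖ξ‖^2 * g ξ) := by ring
        _ ≤ ‖ξ‖^m * conv V f ξ := mul_le_mul_of_nonneg_left hξ (by positivity)
    refine e1.trans ((conv_expand V f hVmeas hVpos hfae hfpos m ξ).trans ?_)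
    refine Finset.sum_le_sum fun k _ => ?_
    exact mul_le_mul_right (termA V f hVmeas hVpos hfpos k (m-k) (Ak k) (hVk1 k) ξ) _
  -- the `F` recursion
  have hFle : ∀ n : ℕ, Fn f (n+1) ≤
      (∑ k ∈ Finset.range (n+1), (n.choose k : ℝ≥0∞) * (ENNReal.ofReal (Ak k) * Fn f (n-k)))
    + (∑ k ∈ Finset.range (n+1), (n.choose k : ℝ≥0∞) *
        (if 2 ≤ n - k then ENNReal.ofReal (Ak k) * Fn g (n-k)
         else ENNReal.ofReal (Ak k * (a*A) * (Ir + 1)))) := by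
    intro n
    refine eLpNormTop_le _ (fun ξ => mul_nonneg (by positivity) (hfpos ξ)) _ ?_
    filter_upwards [h1] with ξ hξ
    have e1 : ENNReal.ofReal (‖ξ‖^(n+1) * f ξ) ≤
        ENNReal.ofReal (‖ξ‖^n) * ENNReal.ofReal (conv W f ξ) +
        ENNReal.ofReal (‖ξ‖^n) * ENNReal.ofReal (conv V g ξ) := by
      have h0 : ‖ξ‖ * f ξ ≤ conv W f ξ + conv V g ξ := by
        nlinarith [hfpos ξ, norm_nonneg ξ]
      have hr : ‖ξ‖^(n+1) * f ξ ≤ ‖ξ‖^n * (conv W f ξ + conv V g ξ) := by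
        calc ‖ξ‖^(n+1) * f ξ = ‖ξ‖^n * (‖ξ‖ * f ξ) := by ring
          _ ≤ ‖ξ‖^n * (conv W f ξ + conv V g ξ) :=
            mul_le_mul_of_nonneg_left h0 (by positivity)
      calc ENNReal.ofReal (‖ξ‖^(n+1) * f ξ)
          ≤ ENNReal.ofReal (‖ξ‖^n * (conv W f ξ + conv V g ξ)) := ENNReal.ofReal_le_ofReal hr
        _ = ENNReal.ofReal (‖ξ‖^n) * ENNReal.ofReal (conv W f ξ + conv V g ξ) :=
            ENNReal.ofReal_mul (by positivity)
        _ ≤ ENNReal.ofReal (‖ξ‖^n) *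
              (ENNReal.ofReal (conv W f ξ) + ENNReal.ofReal (conv V g ξ)) :=
            mul_le_mul_right ENNReal.ofReal_add_le _
        _ = _ := by rw [mul_add]
    refine e1.trans (add_le_add ?_ ?_)
    · refine (conv_expand W f hWmeas hWpos hfae hfpos n ξ).trans ?_
      refine Finset.sum_le_sum fun k _ => ?_
      exact mul_le_mul_right (termA W f hWmeas hWpos hfpos k (n-k) (Ak k) (hWk k) ξ) _
    · refine (conv_expand V g hVmeas hVpos hgmeas.aemeasurable hgpos n ξ).trans ?_
      refine Finset.sum_le_sum fun k _ => ?_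
      refine mul_le_mul_right ?_ _
      by_cases hj : 2 ≤ n - k
      · rw [if_pos hj]
        exact termA V g hVmeas hVpos hgpos k (n-k) (Ak k) (hVk1 k) ξ
      · rw [if_neg hj]
        exact near_term V g hVmeas hVpos hgpos k (n-k) (by omega) (Ak k) (a*A) Ir
          (hAkpos k).le (by positivity) hIr0 (hVk1 k) (hVkinf k) hgK hIrb ξ
  -- constants for the induction
  set β : ℝ := 2 * Real.exp 1 * b with hβdef
  have hβ0 : (0:ℝ) ≤ β := by positivity
  set s0 : ℝ := 2*a + 4*a^2 + 2*a^2*(Ir+1) with hs0def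
  have hs00 : (0:ℝ) ≤ s0 := by positivity
  set s : ℝ := 1 + b + 2*β + s0 with hsdef
  have hs1 : (1:ℝ) ≤ s := by rw [hsdef]; linarith
  have hspos : (0:ℝ) < s := lt_of_lt_of_le one_pos hs1
  have h2β : 2*β ≤ s := by rw [hsdef]; linarith
  have hAkle : ∀ k, Ak k ≤ a * (Nat.factorial k) * β^k := by
    intro k
    calc Ak k = a * b^k * ((2*(k:ℝ)+1) ^ ((k:ℝ)-1)) := rfl
      _ ≤ a * b^k * ((Nat.factorial k : ℝ) * (2*Real.exp 1)^k) := by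
          apply mul_le_mul_of_nonneg_left (c_le k) (by positivity)
      _ = a * (Nat.factorial k) * β^k := by
          rw [hβdef, mul_pow]; ring
  -- the ENNReal-to-real bridge
  have bridge : ∀ (Cn : ℕ) (x x' y : ℝ) (T : ℝ≥0∞), 0 ≤ x → x ≤ x' → 0 ≤ y →
      T ≤ ENNReal.ofReal y →
      (Cn : ℝ≥0∞) * (ENNReal.ofReal x * T) ≤ ENNReal.ofReal ((Cn:ℝ) * x' * y) := by
    intro Cn x x' y T hx hxx' hy hT
    rw [← ENNReal.ofReal_natCast Cn]
    refine (enn_term_le _ _ _ (by positivity) hx T hT).trans ?_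
    apply ENNReal.ofReal_le_ofReal
    calc (Cn:ℝ) * (x*y) ≤ (Cn:ℝ) * (x'*y) := by
          apply mul_le_mul_of_nonneg_left (mul_le_mul_of_nonneg_right hxx' hy) (by positivity)
      _ = (Cn:ℝ)*x'*y := by ring
  -- bound for `G` given bounds on `F` up to `j`
  have hGbound : ∀ j : ℕ,
      (∀ i, i ≤ j → Fn f i ≤ ENNReal.ofReal (A * s^i * (Nat.factorial i))) →
      Fn g (j+2) ≤ ENNReal.ofReal (2*a*A*s^j*(Nat.factorial j)) := by
    intro j hIH
    refine (hGle j).trans ?_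
    refine enn_sum_le j _
      (fun k => (j.choose k : ℝ) * (a * (Nat.factorial k) * β^k) *
        (A * s^(j-k) * (Nat.factorial (j-k)))) (fun k => by positivity) ?_ _ ?_
    · intro k _
      exact bridge (j.choose k) (Ak k) _ _ _ (hAkpos k).le (hAkle k) (by positivity)
        (hIH (j-k) (Nat.sub_le j k))
    · exact sum_bound a β s ha.le hs1 hβ0 h2β j A hApos.le _
        (fun i => by positivity) (fun i _ => le_refl _)
  -- the main induction
  set D2 : ℝ := 2*a*A + a*A*(Ir+1) with hD2def
  have hD20 : (0:ℝ) ≤ D2 := by positivity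
  have main : ∀ n : ℕ, Fn f n ≤ ENNReal.ofReal (A * s^n * (Nat.factorial n)) := by
    intro n
    induction n using Nat.strong_induction_on with
    | _ n IH =>
      match n with
      | 0 => simpa using hF0
      | (m+1) =>
        have IH' : ∀ j, j ≤ m → Fn f j ≤ ENNReal.ofReal (A * s^j * (Nat.factorial j)) :=
          fun j hj => IH j (by omega)
        have hsum1 : (∑ k ∈ Finset.range (m+1), (m.choose k : ℝ≥0∞) *
            (ENNReal.ofReal (Ak k) * Fn f (m-k)))
            ≤ ENNReal.ofReal (2*a*A*s^m*(Nat.factorial m)) := by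
          refine enn_sum_le m _
            (fun k => (m.choose k : ℝ) * (a * (Nat.factorial k) * β^k) *
              (A * s^(m-k) * (Nat.factorial (m-k)))) (fun k => by positivity) ?_ _ ?_
          · intro k _
            exact bridge (m.choose k) (Ak k) _ _ _ (hAkpos k).le (hAkle k) (by positivity)
              (IH' (m-k) (Nat.sub_le m k))
          · exact sum_bound a β s ha.le hs1 hβ0 h2β m A hApos.le _
              (fun i => by positivity) (fun i _ => le_refl _)
        have hUb : ∀ i : ℕ,
            (if 2 ≤ i then 2*a*A*s^(i-2)*(Nat.factorial (i-2)) else a*A*(Ir+1))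
              ≤ D2 * s^i * (Nat.factorial i) := by
          intro i
          have hspow1 : (1:ℝ) ≤ s^i := one_le_pow₀ hs1
          have hfac1 : (1:ℝ) ≤ (Nat.factorial i : ℝ) := by
            exact_mod_cast Nat.one_le_iff_ne_zero.mpr (Nat.factorial_ne_zero i)
          by_cases hi : 2 ≤ i
          · rw [if_pos hi]
            have e1 : s^(i-2) ≤ s^i := pow_le_pow_right₀ hs1 (by omega)
            have e2 : (Nat.factorial (i-2) : ℝ) ≤ (Nat.factorial i : ℝ) := by
              exact_mod_cast Nat.factorial_le (by omega)
            have e3 : (0:ℝ) ≤ (Nat.factorial (i-2) : ℝ) := by positivity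
            calc 2*a*A*s^(i-2)*(Nat.factorial (i-2))
                ≤ 2*a*A*s^i*(Nat.factorial i) := by
                  apply mul_le_mul ?_ e2 e3 (by positivity)
                  apply mul_le_mul_of_nonneg_left e1 (by positivity)
              _ ≤ D2 * s^i * (Nat.factorial i) := by
                  have h23 : 2*a*A ≤ D2 := by rw [hD2def]; nlinarith [hIr0]
                  apply mul_le_mul_of_nonneg_right
                    (mul_le_mul_of_nonneg_right h23 (by positivity)) (by positivity)
          · rw [if_neg hi]
            have h1' : a*A*(Ir+1) ≤ D2 := by rw [hD2def]; nlinarith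
            calc a*A*(Ir+1) ≤ D2 := h1'
              _ = D2 * 1 * 1 := by ring
              _ ≤ D2 * s^i * (Nat.factorial i) := by
                  apply mul_le_mul (mul_le_mul_of_nonneg_left hspow1 hD20) hfac1
                    (by norm_num) (by positivity)
        have hsum2 : (∑ k ∈ Finset.range (m+1), (m.choose k : ℝ≥0∞) *
            (if 2 ≤ m - k then ENNReal.ofReal (Ak k) * Fn g (m-k)
             else ENNReal.ofReal (Ak k * (a*A) * (Ir + 1))))
            ≤ ENNReal.ofReal (2*a*D2*s^m*(Nat.factorial m)) := by
          refine enn_sum_le m _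
            (fun k => (m.choose k : ℝ) * (a * (Nat.factorial k) * β^k) *
              (if 2 ≤ m-k then 2*a*A*s^(m-k-2)*(Nat.factorial (m-k-2)) else a*A*(Ir+1)))
            (fun k => by
              have := hIr0
              by_cases h2k : 2 ≤ m-k
              · rw [if_pos h2k]; positivity
              · rw [if_neg h2k]; positivity) ?_ _ ?_
          · intro k _
            by_cases h2k : 2 ≤ m-k
            · rw [if_pos h2k, if_pos h2k]
              have hg' : Fn g (m-k) ≤
                  ENNReal.ofReal (2*a*A*s^(m-k-2)*(Nat.factorial (m-k-2))) := by
                have hrw : m - k = (m-k-2)+2 := by omega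
                rw [hrw]
                exact hGbound (m-k-2) (fun i hi => IH' i (by omega))
              exact bridge (m.choose k) (Ak k) _ _ _ (hAkpos k).le (hAkle k)
                (by positivity) hg'
            · rw [if_neg h2k, if_neg h2k]
              have hsplitr : ENNReal.ofReal (Ak k * (a*A) * (Ir + 1)) =
                  ENNReal.ofReal (Ak k) * ENNReal.ofReal ((a*A) * (Ir + 1)) := by
                rw [mul_assoc, ENNReal.ofReal_mul (hAkpos k).le]
              rw [hsplitr]
              exact bridge (m.choose k) (Ak k) _ _ _ (hAkpos k).le (hAkle k)
                (by positivity) (le_refl _)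
          · refine le_trans (sum_bound a β s ha.le hs1 hβ0 h2β m D2 hD20
              (fun i => if 2 ≤ i then 2*a*A*s^(i-2)*(Nat.factorial (i-2)) else a*A*(Ir+1))
              ?_ (fun i _ => hUb i)) (le_refl _)
            intro i
            by_cases hi : 2 ≤ i
            · rw [if_pos hi]; positivity
            · rw [if_neg hi]; positivity
        refine (hFle m).trans ?_
        calc (∑ k ∈ Finset.range (m+1), (m.choose k : ℝ≥0∞) *
              (ENNReal.ofReal (Ak k) * Fn f (m-k)))
            + (∑ k ∈ Finset.range (m+1), (m.choose k : ℝ≥0∞) *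
              (if 2 ≤ m - k then ENNReal.ofReal (Ak k) * Fn g (m-k)
               else ENNReal.ofReal (Ak k * (a*A) * (Ir + 1))))
            ≤ ENNReal.ofReal (2*a*A*s^m*(Nat.factorial m)) +
              ENNReal.ofReal (2*a*D2*s^m*(Nat.factorial m)) := add_le_add hsum1 hsum2
          _ = ENNReal.ofReal (2*a*A*s^m*(Nat.factorial m) + 2*a*D2*s^m*(Nat.factorial m)) :=
              (ENNReal.ofReal_add (by positivity) (by positivity)).symm
          _ ≤ ENNReal.ofReal (A * s^(m+1) * (Nat.factorial (m+1))) := by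
              apply ENNReal.ofReal_le_ofReal
              have hfs : (Nat.factorial (m+1) : ℝ) = ((m:ℝ)+1) * (Nat.factorial m) := by
                rw [Nat.factorial_succ]; push_cast; ring
              have hkey : 2*a*A + 2*a*D2 ≤ A * s := by
                have : 2*a*A + 2*a*D2 = A * s0 := by rw [hD2def, hs0def]; ring
                rw [this]
                apply mul_le_mul_of_nonneg_left _ hApos.le
                rw [hsdef]; linarith
              calc 2*a*A*s^m*(Nat.factorial m) + 2*a*D2*s^m*(Nat.factorial m)
                  = (2*a*A + 2*a*D2) * (s^m*(Nat.factorial m)) := by ring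
                _ ≤ (A*s) * (s^m*(Nat.factorial m)) := by
                    apply mul_le_mul_of_nonneg_right hkey (by positivity)
                _ ≤ (A*s) * (s^m*(((m:ℝ)+1) * Nat.factorial m)) := by
                    have h1' : (1:ℝ) ≤ (m:ℝ)+1 := by
                      linarith [Nat.cast_nonneg (α := ℝ) m]
                    have hfp : (0:ℝ) < (Nat.factorial m : ℝ) := by
                      exact_mod_cast Nat.factorial_pos m
                    have : (Nat.factorial m : ℝ) ≤ ((m:ℝ)+1) * Nat.factorial m := by
                      nlinarith
                    apply mul_le_mul_of_nonneg_left _ (by positivity)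
                    apply mul_le_mul_of_nonneg_left this (by positivity)
                _ = A * s^(m+1) * (Nat.factorial (m+1)) := by
                    rw [hfs, pow_succ]; ring
  -- conclusion
  refine ⟨(2*a+1)*A + 1, s, by positivity, hspos, fun n => ⟨?_, ?_⟩⟩
  · refine (main n).trans (ENNReal.ofReal_le_ofReal ?_)
    have h1' : (Nat.factorial n : ℝ) ≤ (2*(n:ℝ)+1) ^ ((n:ℝ)-1) := fact_le_c n
    have h2' : A ≤ (2*a+1)*A + 1 := by nlinarith
    have h3' : (0:ℝ) < (2*(n:ℝ)+1) ^ ((n:ℝ)-1) := Real.rpow_pos_of_pos (by positivity) _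
    calc A * s^n * (Nat.factorial n) ≤ A * s^n * ((2*(n:ℝ)+1) ^ ((n:ℝ)-1)) := by
          apply mul_le_mul_of_nonneg_left h1' (by positivity)
      _ ≤ ((2*a+1)*A + 1) * s^n * ((2*(n:ℝ)+1) ^ ((n:ℝ)-1)) := by
          apply mul_le_mul_of_nonneg_right _ h3'.le
          apply mul_le_mul_of_nonneg_right h2' (by positivity)
  · have hgb : Fn g (n+2) ≤ ENNReal.ofReal (2*a*A*s^n*(Nat.factorial n)) :=
      hGbound n (fun i _ => main i)
    refine hgb.trans (ENNReal.ofReal_le_ofReal ?_)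
    have h1' : (Nat.factorial n : ℝ) ≤ (2*((n:ℝ)+2)+1) ^ (n+1:ℕ) := fact_le_c2 n
    have h2' : 2*a*A ≤ (2*a+1)*A + 1 := by nlinarith
    have hsp : s^n ≤ s^(n+2) := pow_le_pow_right₀ hs1 (by omega)
    have h3' : (0:ℝ) ≤ (2*((n:ℝ)+2)+1) ^ (n+1:ℕ) := by positivity
    calc 2*a*A*s^n*(Nat.factorial n)
        ≤ ((2*a+1)*A + 1) * s^(n+2) * ((2*((n:ℝ)+2)+1) ^ (n+1:ℕ)) := by
          apply mul_le_mul ?_ h1' (by positivity) (by positivity)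
          apply mul_le_mul h2' hsp (by positivity) (by positivity)
      _ = ((2*a+1)*A + 1) * s^(n+2) * ((2*((n:ℝ)+2)+1) ^ (n+1:ℕ)) := rfl
end
end

section
/- Let α > 0, a > 0, b > 0, let f ∈ L¹(ℝ³) with f ≥ 0, and let W ≥ 0 be measurable on ℝ³ with |ξ|² W(ξ) ≤ α (f * f)(ξ) a.e. Let m ∈ ℕ₀ and suppose g_0, …, g_m are non-negative integrable functions on ℝ³ such that for each k = 0, …, m: |ξ|ᵏ f(ξ) ≤ (g_k * f)(ξ) a.e. and ‖g_k‖_{L¹} ≤ a bᵏ (2k+1)^{k−1}. Then ‖ |ξ|^{m+2} W ‖_{L¹} ≤ 2 α a² b^m ‖f‖_{L¹}² (2m+2)^{m−1}. -/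
open MeasureTheory Filter

noncomputable section

namespace MomentAux

open Polynomial Finset

noncomputable def abP : ℕ → Polynomial ℝ
  | 0 => 1
  | (k+1) => X * (X + C ((k:ℝ)+1)) ^ k

lemma C_shift (k : ℕ) : (C ((k:ℝ)+2) : ℝ[X]) = C ((k:ℝ)+1) + 1 := by
  rw [show ((k:ℝ)+2) = ((k:ℝ)+1)+1 by ring, C_add, C_1]

lemma abP_comp_add_one (k : ℕ) :
    (abP (k+1)).comp (X + 1) = (X + 1) * (X + C ((k:ℝ)+2)) ^ k := by
  show (X * (X + C ((k:ℝ)+1)) ^ k).comp (X + 1) = _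
  rw [mul_comp, pow_comp, add_comp, X_comp, C_comp, C_shift]
  ring_nf

lemma abP_deriv (k : ℕ) : derivative (abP (k+1)) = C ((k:ℝ)+1) * (abP k).comp (X + 1) := by
  cases k with
  | zero => simp [abP]
  | succ j =>
    rw [abP_comp_add_one]
    have hcast : ((j+1:ℕ):ℝ) + 1 = (j:ℝ)+2 := by push_cast; ring
    show derivative (X * (X + C (((j+1:ℕ):ℝ)+1)) ^ (j+1)) = _
    rw [hcast]
    rw [derivative_mul, derivative_X, derivative_pow, derivative_add, derivative_X,
      derivative_C, one_mul, add_zero, mul_one, Nat.add_sub_cancel,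
      pow_succ (X + C ((j:ℝ)+2)) j]
    have hC : (C ((j:ℝ)+2) : ℝ[X]) = ((j:ℕ) : ℝ[X]) + 2 := by
      rw [show ((j:ℝ)+2) = ((j:ℕ):ℝ) + ((2:ℕ):ℝ) by push_cast; ring, C_add,
        C_eq_natCast, C_eq_natCast]
      norm_num
    have hN : (C (((j+1:ℕ)):ℝ) : ℝ[X]) = ((j:ℕ) : ℝ[X]) + 1 := by
      rw [C_eq_natCast]; push_cast; ring
    rw [hC, hN]
    ring

lemma abP_eval_zero (k : ℕ) : (abP k).eval 0 = if k = 0 then 1 else 0 := by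
  cases k <;> simp [abP]

lemma hurwitz (n : ℕ) : ∀ y : ℝ,
    ∑ k ∈ range (n+1), ((n.choose k : ℕ) : ℝ[X]) * abP k * C ((abP (n-k)).eval y)
      = (abP n).comp (X + C y) := by
  induction n with
  | zero => intro y; simp [abP]
  | succ n ih =>
    intro y
    set P : ℝ[X] := ∑ k ∈ range (n+1+1), (((n+1).choose k : ℕ) : ℝ[X]) * abP k * C ((abP (n+1-k)).eval y) with hP
    set Q : ℝ[X] := (abP (n+1)).comp (X + C y) with hQ
    have hQd : derivative Q = C ((n:ℝ)+1) * (abP n).comp (X + C y + 1) := by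
      rw [hQ, derivative_comp, abP_deriv n, mul_comp, C_comp, comp_assoc]
      simp [add_comp]
    have hPd : derivative P = C ((n:ℝ)+1) * (abP n).comp (X + C y + 1) := by
      rw [hP, map_sum derivative]
      have hterm : ∀ k, derivative ((((n+1).choose k : ℕ) : ℝ[X]) * abP k * C ((abP (n+1-k)).eval y))
          = (((n+1).choose k : ℕ) : ℝ[X]) * derivative (abP k) * C ((abP (n+1-k)).eval y) := by
        intro k
        rw [derivative_mul, derivative_mul, derivative_natCast, derivative_C]
        ring
      rw [Finset.sum_congr rfl (fun k _ => hterm k), Finset.sum_range_succ']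
      have h0 : (((n+1).choose 0 : ℕ) : ℝ[X]) * derivative (abP 0) * C ((abP (n+1-0)).eval y) = 0 := by
        show _ * derivative (1 : ℝ[X]) * _ = 0
        simp
      rw [h0, add_zero]
      have hterm2 : ∀ k ∈ range (n+1),
          (((n+1).choose (k+1) : ℕ) : ℝ[X]) * derivative (abP (k+1)) * C ((abP (n+1-(k+1))).eval y)
          = C ((n:ℝ)+1) * (((n.choose k : ℕ) : ℝ[X]) * (abP k).comp (X+1) * C ((abP (n-k)).eval y)) := by
        intro k _
        rw [abP_deriv k, Nat.succ_sub_succ]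
        have hc : (((n+1).choose (k+1) : ℕ) : ℝ) * ((k:ℝ)+1) = ((n:ℝ)+1) * ((n.choose k : ℕ) : ℝ) := by
          have h := congrArg (Nat.cast : ℕ → ℝ) (Nat.add_one_mul_choose_eq n k)
          push_cast at h
          linarith
        have hCs : (((n+1).choose (k+1) : ℕ) : ℝ[X]) * C ((k:ℝ)+1)
            = C ((n:ℝ)+1) * ((n.choose k : ℕ) : ℝ[X]) := by
          rw [← C_eq_natCast, ← C_eq_natCast, ← C_mul, ← C_mul, hc]
        linear_combination hCs * ((abP k).comp (X + 1) * C ((abP (n-k)).eval y))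
      rw [Finset.sum_congr rfl hterm2, ← Finset.mul_sum]
      congr 1
      have hcomp := congrArg (fun p : ℝ[X] => p.comp ((X:ℝ[X]) + 1)) (ih y)
      simp only [Polynomial.sum_comp, mul_comp, natCast_comp, C_comp] at hcomp
      rw [hcomp, comp_assoc, show ((X:ℝ[X]) + C y).comp (X+1) = X + C y + 1 by
        simp [add_comp]; ring]
    have h0 : P.eval 0 = Q.eval 0 := by
      rw [hP, hQ, eval_finset_sum, eval_comp]
      rw [Finset.sum_eq_single 0]
      · simp [abP]
      · intro b _ hb
        simp [abP_eval_zero, hb]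
      · intro h
        exact absurd (Finset.mem_range.mpr (Nat.succ_pos _)) h
    have hPQ : P - Q = C ((P - Q).coeff 0) :=
      eq_C_of_derivative_eq_zero (by rw [derivative_sub, hPd, hQd, sub_self])
    have hz : P - Q = 0 := by
      rw [hPQ, coeff_zero_eq_eval_zero, eval_sub, h0, sub_self, map_zero]
    exact sub_eq_zero.mp hz

lemma hurwitz_eval (n : ℕ) (x y : ℝ) :
    ∑ k ∈ range (n+1), ((n.choose k : ℕ) : ℝ) * (abP k).eval x * (abP (n-k)).eval y
      = (abP n).eval (x+y) := by
  have h := congrArg (eval x) (hurwitz n y)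
  simpa [eval_finset_sum, eval_comp] using h

lemma abP_eval_half (k : ℕ) :
    (abP k).eval (1/2) = (2*(k:ℝ)+1) ^ ((k:ℝ)-1) / 2^k := by
  cases k with
  | zero => simp [abP]
  | succ j =>
    have he : (((j+1:ℕ):ℝ)) - 1 = (j:ℕ) := by push_cast; ring
    rw [he, Real.rpow_natCast]
    have : (abP (j+1)).eval (1/2) = (1/2) * ((1/2) + ((j:ℝ)+1))^j := by simp [abP]
    rw [this]
    have h2 : (1/2 : ℝ) + ((j:ℝ)+1) = (2*((j+1:ℕ):ℝ)+1)/2 := by push_cast; ring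
    rw [h2, div_pow]
    push_cast
    field_simp
    ring

lemma abP_eval_one (k : ℕ) : (abP k).eval 1 = ((k:ℝ)+1) ^ ((k:ℝ)-1) := by
  cases k with
  | zero => simp [abP]
  | succ j =>
    have he : (((j+1:ℕ):ℝ)) - 1 = (j:ℕ) := by push_cast; ring
    rw [he, Real.rpow_natCast]
    have : (abP (j+1)).eval 1 = (1 + ((j:ℝ)+1))^j := by simp [abP]
    rw [this]
    push_cast
    ring_nf

lemma key_sum (m : ℕ) :
    ∑ k ∈ range (m+1), ((m.choose k : ℕ) : ℝ)
        * ((2*(k:ℝ)+1) ^ ((k:ℝ)-1)) * ((2*((m-k:ℕ):ℝ)+1) ^ (((m-k:ℕ):ℝ)-1))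
      = 2 * (2*(m:ℝ)+2) ^ ((m:ℝ)-1) := by
  have h := hurwitz_eval m (1/2) (1/2)
  rw [show (1/2 : ℝ) + 1/2 = 1 by norm_num, abP_eval_one] at h
  have hterm : ∀ k ∈ range (m+1),
      ((m.choose k : ℕ) : ℝ) * ((2*(k:ℝ)+1) ^ ((k:ℝ)-1)) * ((2*((m-k:ℕ):ℝ)+1) ^ (((m-k:ℕ):ℝ)-1))
      = 2^m * (((m.choose k : ℕ) : ℝ) * (abP k).eval (1/2) * (abP (m-k)).eval (1/2)) := by
    intro k hk
    rw [abP_eval_half, abP_eval_half]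
    have hkm : k ≤ m := Nat.lt_succ_iff.mp (Finset.mem_range.mp hk)
    have hpow : (2:ℝ)^k * 2^(m-k) = 2^m := by
      rw [← pow_add, Nat.add_sub_cancel' hkm]
    rw [← hpow]
    field_simp
  rw [Finset.sum_congr rfl hterm, ← Finset.mul_sum, h]
  have h2 : (2:ℝ) * (m:ℝ) + 2 = 2 * ((m:ℝ)+1) := by ring
  rw [h2, Real.mul_rpow (by norm_num) (by positivity)]
  have h3 : (2:ℝ) ^ ((m:ℝ)-1) = 2^(m:ℕ) / 2 := by
    rw [Real.rpow_sub (by norm_num), Real.rpow_natCast, Real.rpow_one]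
  rw [h3]
  ring

open ENNReal

lemma lintegral_conv (F G : E3 → ℝ≥0∞) (hF : Measurable F) (hG : Measurable G) :
    (∫⁻ ξ, ∫⁻ η, F (ξ - η) * G η) = (∫⁻ ξ, F ξ) * (∫⁻ η, G η) := by
  rw [lintegral_lintegral_swap]
  · have h1 : ∀ η : E3, (∫⁻ ξ, F (ξ - η) * G η) = (∫⁻ ξ, F ξ) * G η := by
      intro η
      have hm : Measurable (fun ξ : E3 => F (ξ - η)) :=
        hF.comp (measurable_id.sub measurable_const)
      rw [lintegral_mul_const _ hm, lintegral_sub_right_eq_self F η]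
    simp_rw [h1]
    exact lintegral_const_mul _ hG
  · exact ((hF.comp (measurable_fst.sub measurable_snd)).mul (hG.comp measurable_snd)).aemeasurable

lemma ofReal_integral_le (h : E3 → ℝ) (hh : ∀ x, 0 ≤ h x) :
    ENNReal.ofReal (∫ x, h x) ≤ ∫⁻ x, ENNReal.ofReal (h x) := by
  by_cases hi : Integrable h
  · exact le_of_eq (ofReal_integral_eq_lintegral_ofReal hi (ae_of_all _ hh))
  · simp [MeasureTheory.integral_undef hi]

end MomentAux

open MomentAux Finset ENNReal

/-- the estimate for `‖ |ξ|^{m+2} W ‖₁` in the proof of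
Proposition 4.2.  If `|ξ|² W ≤ α (f ∗ f)` a.e. and `g₀, …, g_m` satisfy
`|ξ|ᵏ f ≤ g_k ∗ f` a.e. with `‖g_k‖₁ ≤ a bᵏ (2k+1)^{k-1}` for `k ≤ m`, then
`‖ |ξ|^{m+2} W ‖₁ ≤ 2 α a² b^m ‖f‖₁² (2m+2)^{m-1}`. -/
theorem moment_bound_for_W
    (α a b : ℝ) (hα : 0 < α) (ha : 0 < a) (hb : 0 < b)
    (f W : E3 → ℝ)
    (hfint : Integrable f) (hfpos : ∀ ξ : E3, 0 ≤ f ξ)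
    (hWpos : ∀ ξ : E3, 0 ≤ W ξ) (hWmeas : Measurable W)
    (hW : ∀ᵐ ξ : E3 ∂(volume), ‖ξ‖^2 * W ξ ≤ α * conv f f ξ)
    (m : ℕ) (g : ℕ → E3 → ℝ)
    (hg : ∀ k : ℕ, k ≤ m →
      (∀ ξ : E3, 0 ≤ g k ξ) ∧ Integrable (g k) ∧
      (∀ᵐ ξ : E3 ∂(volume), ‖ξ‖^k * f ξ ≤ conv (g k) f ξ) ∧
      (∫ ξ : E3, g k ξ) ≤ a * b^k * (2*(k:ℝ)+1) ^ ((k:ℝ)-1)) :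
    eLpNorm (fun ξ : E3 => ‖ξ‖^(m+2) * W ξ) 1 (volume : Measure E3) ≤
      ENNReal.ofReal
        (2 * α * a^2 * b^m * (∫ ξ : E3, f ξ)^2 * (2*(m:ℝ)+2) ^ ((m:ℝ)-1)) := by
  classical
  obtain ⟨f₁, hf₁m, hf₁ae⟩ := hfint.aemeasurable
  set fm : E3 → ℝ := fun x => max (f₁ x) 0 with hfmdef
  have hfmm : Measurable fm := hf₁m.max measurable_const
  have hfmae : f =ᵐ[volume] fm := by
    filter_upwards [hf₁ae] with x hx
    simp only [hfmdef, ← hx, max_eq_left (hfpos x)]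
  have hfmpos : ∀ x, 0 ≤ fm x := fun x => le_max_right _ _
  set I := ∫ ξ : E3, f ξ with hI
  have hI0 : 0 ≤ I := integral_nonneg hfpos
  set c : ℕ → ℝ := fun k => (2*(k:ℝ)+1) ^ ((k:ℝ)-1) with hc
  have hc0 : ∀ k, 0 ≤ c k := fun k => Real.rpow_nonneg (by positivity) _
  set F : ℕ → E3 → ℝ≥0∞ := fun k ξ => ENNReal.ofReal (‖ξ‖^k * fm ξ) with hFdef
  have hFm : ∀ k, Measurable (F k) := fun k =>
    ENNReal.measurable_ofReal.comp ((measurable_norm.pow_const k).mul hfmm)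
  have hF0 : (∫⁻ ξ, F 0 ξ) = ENNReal.ofReal I := by
    rw [hI, MeasureTheory.ofReal_integral_eq_lintegral_ofReal hfint (ae_of_all _ hfpos)]
    refine lintegral_congr_ae ?_
    filter_upwards [hfmae] with x hx
    simp [hFdef, hx]
  have hmp : ∀ ξ : E3, MeasurePreserving (fun η : E3 => ξ - η) volume volume := by
    intro ξ
    simp_rw [sub_eq_add_neg]
    exact (measurePreserving_add_left volume ξ).comp (Measure.measurePreserving_neg volume)
  have hconvfm : ∀ ξ, conv f f ξ = ∫ η, fm (ξ - η) * fm η := by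
    intro ξ
    refine integral_congr_ae ?_
    have h1 : (fun η => f (ξ - η)) =ᵐ[volume] (fun η => fm (ξ - η)) :=
      (hmp ξ).quasiMeasurePreserving.ae_eq_comp hfmae
    filter_upwards [h1, hfmae] with η h1' h2'
    rw [show f (ξ - η) = fm (ξ - η) from h1', h2']
  -- the moment bounds L_k
  have hL : ∀ k, k ≤ m → (∫⁻ ξ, F k ξ) ≤ ENNReal.ofReal (a * b^k * c k) * ENNReal.ofReal I := by
    intro k hk
    obtain ⟨hgpos, hgint, hgae, hgnorm⟩ := hg k hk
    obtain ⟨g₁, hg₁m, hg₁ae⟩ := hgint.aemeasurable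
    set gm : E3 → ℝ := fun x => max (g₁ x) 0 with hgmdef
    have hgmm : Measurable gm := hg₁m.max measurable_const
    have hgmae : g k =ᵐ[volume] gm := by
      filter_upwards [hg₁ae] with x hx
      simp only [hgmdef, ← hx, max_eq_left (hgpos x)]
    have hgmpos : ∀ x, 0 ≤ gm x := fun x => le_max_right _ _
    set G : E3 → ℝ≥0∞ := fun ξ => ENNReal.ofReal (gm ξ) with hGdef
    have hGm : Measurable G := ENNReal.measurable_ofReal.comp hgmm
    have s1 : (∫⁻ ξ, F k ξ) ≤ ∫⁻ ξ, ENNReal.ofReal (conv (g k) f ξ) := by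
      refine lintegral_mono_ae ?_
      filter_upwards [hgae, hfmae] with ξ h1 h2
      refine ENNReal.ofReal_le_ofReal ?_
      rw [← h2]; exact h1
    have s2 : ∀ ξ, ENNReal.ofReal (conv (g k) f ξ) ≤ ∫⁻ η, G (ξ - η) * F 0 η := by
      intro ξ
      have e1 : conv (g k) f ξ = ∫ η, gm (ξ - η) * fm η := by
        refine integral_congr_ae ?_
        have h1 : (fun η => g k (ξ - η)) =ᵐ[volume] (fun η => gm (ξ - η)) :=
          (hmp ξ).quasiMeasurePreserving.ae_eq_comp hgmae
        filter_upwards [h1, hfmae] with η h1' h2'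
        rw [show g k (ξ - η) = gm (ξ - η) from h1', h2']
      rw [e1]
      calc ENNReal.ofReal (∫ η, gm (ξ - η) * fm η)
          ≤ ∫⁻ η, ENNReal.ofReal (gm (ξ - η) * fm η) :=
            ofReal_integral_le _ (fun η => mul_nonneg (hgmpos _) (hfmpos _))
        _ = ∫⁻ η, G (ξ - η) * F 0 η := by
            refine lintegral_congr (fun η => ?_)
            rw [ENNReal.ofReal_mul (hgmpos _)]
            simp [hGdef, hFdef]
    have s4 : (∫⁻ ξ, G ξ) ≤ ENNReal.ofReal (a * b^k * c k) := by
      have e2 : (∫⁻ ξ, G ξ) = ENNReal.ofReal (∫ ξ, g k ξ) := by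
        rw [MeasureTheory.ofReal_integral_eq_lintegral_ofReal hgint (ae_of_all _ hgpos)]
        refine lintegral_congr_ae ?_
        filter_upwards [hgmae] with x hx
        simp [hGdef, ← hx]
      rw [e2]
      exact ENNReal.ofReal_le_ofReal hgnorm
    calc (∫⁻ ξ, F k ξ) ≤ ∫⁻ ξ, ENNReal.ofReal (conv (g k) f ξ) := s1
      _ ≤ ∫⁻ ξ, ∫⁻ η, G (ξ - η) * F 0 η := lintegral_mono s2
      _ = (∫⁻ ξ, G ξ) * (∫⁻ ξ, F 0 ξ) := lintegral_conv G (F 0) hGm (hFm 0)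
      _ ≤ ENNReal.ofReal (a * b^k * c k) * ENNReal.ofReal I := by
          rw [hF0]; exact mul_le_mul_left s4 _
  -- main chain
  have hchain1 : eLpNorm (fun ξ : E3 => ‖ξ‖^(m+2) * W ξ) 1 (volume : Measure E3)
      = ∫⁻ ξ, ENNReal.ofReal (‖ξ‖^(m+2) * W ξ) := by
    rw [eLpNorm_one_eq_lintegral_enorm]
    refine lintegral_congr (fun ξ => ?_)
    exact Real.enorm_eq_ofReal (mul_nonneg (pow_nonneg (norm_nonneg _) _) (hWpos ξ))
  have hchain2 : (∫⁻ ξ, ENNReal.ofReal (‖ξ‖^(m+2) * W ξ))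
      ≤ ∫⁻ ξ, ENNReal.ofReal α * ENNReal.ofReal (‖ξ‖^m * conv f f ξ) := by
    refine lintegral_mono_ae ?_
    filter_upwards [hW] with ξ hξ
    rw [← ENNReal.ofReal_mul hα.le]
    refine ENNReal.ofReal_le_ofReal ?_
    have h1 : ‖ξ‖^(m+2) * W ξ = ‖ξ‖^m * (‖ξ‖^2 * W ξ) := by rw [pow_add]; ring
    rw [h1]
    calc ‖ξ‖^m * (‖ξ‖^2 * W ξ) ≤ ‖ξ‖^m * (α * conv f f ξ) :=
        mul_le_mul_of_nonneg_left hξ (pow_nonneg (norm_nonneg _) _)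
      _ = α * (‖ξ‖^m * conv f f ξ) := by ring
  have hchain3 : ∀ ξ : E3, ENNReal.ofReal (‖ξ‖^m * conv f f ξ)
      ≤ ∫⁻ η, ENNReal.ofReal (‖ξ‖^m * (fm (ξ - η) * fm η)) := by
    intro ξ
    rw [hconvfm ξ, ← MeasureTheory.integral_const_mul]
    exact ofReal_integral_le _ (fun η => mul_nonneg (pow_nonneg (norm_nonneg _) _)
      (mul_nonneg (hfmpos _) (hfmpos _)))
  have hchain4 : ∀ ξ η : E3, ENNReal.ofReal (‖ξ‖^m * (fm (ξ - η) * fm η))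
      ≤ ∑ k ∈ range (m+1), ((m.choose k : ℕ) : ℝ≥0∞) * (F k (ξ - η) * F (m-k) η) := by
    intro ξ η
    have hr : ‖ξ‖^m * (fm (ξ - η) * fm η)
        ≤ ∑ k ∈ range (m+1), ((m.choose k : ℕ) : ℝ)
            * ((‖ξ - η‖^k * fm (ξ - η)) * (‖η‖^(m-k) * fm η)) := by
      have hn : ‖ξ‖ ≤ ‖ξ - η‖ + ‖η‖ := by
        calc ‖ξ‖ = ‖(ξ - η) + η‖ := by rw [sub_add_cancel]
          _ ≤ ‖ξ - η‖ + ‖η‖ := norm_add_le _ _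
      have h2 : ‖ξ‖^m ≤ (‖ξ - η‖ + ‖η‖)^m := pow_le_pow_left₀ (norm_nonneg _) hn m
      calc ‖ξ‖^m * (fm (ξ - η) * fm η) ≤ (‖ξ - η‖ + ‖η‖)^m * (fm (ξ - η) * fm η) :=
          mul_le_mul_of_nonneg_right h2 (mul_nonneg (hfmpos _) (hfmpos _))
        _ = ∑ k ∈ range (m+1), ((m.choose k : ℕ) : ℝ)
            * ((‖ξ - η‖^k * fm (ξ - η)) * (‖η‖^(m-k) * fm η)) := by
            rw [add_pow, Finset.sum_mul]
            refine Finset.sum_congr rfl (fun k _ => ?_)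
            ring
    calc ENNReal.ofReal (‖ξ‖^m * (fm (ξ - η) * fm η))
        ≤ ENNReal.ofReal (∑ k ∈ range (m+1), ((m.choose k : ℕ) : ℝ)
            * ((‖ξ - η‖^k * fm (ξ - η)) * (‖η‖^(m-k) * fm η))) := ENNReal.ofReal_le_ofReal hr
      _ = ∑ k ∈ range (m+1), ((m.choose k : ℕ) : ℝ≥0∞) * (F k (ξ - η) * F (m-k) η) := by
          rw [ENNReal.ofReal_sum_of_nonneg (fun k _ =>
            mul_nonneg (Nat.cast_nonneg _) (mul_nonneg
              (mul_nonneg (pow_nonneg (norm_nonneg _) _) (hfmpos _))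
              (mul_nonneg (pow_nonneg (norm_nonneg _) _) (hfmpos _))))]
          refine Finset.sum_congr rfl (fun k _ => ?_)
          rw [ENNReal.ofReal_mul (Nat.cast_nonneg _),
            ENNReal.ofReal_mul (mul_nonneg (pow_nonneg (norm_nonneg _) _) (hfmpos _)),
            ENNReal.ofReal_natCast]
  have hswap : (∫⁻ ξ, ∫⁻ η, ∑ k ∈ range (m+1), ((m.choose k : ℕ) : ℝ≥0∞) * (F k (ξ - η) * F (m-k) η))
      = ∑ k ∈ range (m+1), ((m.choose k : ℕ) : ℝ≥0∞) * ((∫⁻ ξ, F k ξ) * (∫⁻ ξ, F (m-k) ξ)) := by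
    have hmeasp : ∀ k : ℕ, Measurable (fun p : E3 × E3 => F k (p.1 - p.2) * F (m-k) p.2) := fun k =>
      ((hFm k).comp (measurable_fst.sub measurable_snd)).mul ((hFm (m-k)).comp measurable_snd)
    have hin : ∀ ξ : E3, (∫⁻ η, ∑ k ∈ range (m+1), ((m.choose k : ℕ) : ℝ≥0∞) * (F k (ξ - η) * F (m-k) η))
        = ∑ k ∈ range (m+1), ((m.choose k : ℕ) : ℝ≥0∞) * ∫⁻ η, F k (ξ - η) * F (m-k) η := by
      intro ξ
      rw [lintegral_finset_sum]
      · refine Finset.sum_congr rfl (fun k _ => ?_)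
        exact lintegral_const_mul _ (((hFm k).comp (measurable_const.sub measurable_id)).mul (hFm (m-k)))
      · intro k _
        exact measurable_const.mul (((hFm k).comp (measurable_const.sub measurable_id)).mul (hFm (m-k)))
    simp_rw [hin]
    rw [lintegral_finset_sum]
    · refine Finset.sum_congr rfl (fun k _ => ?_)
      rw [lintegral_const_mul _ ((hmeasp k).lintegral_prod_right'), lintegral_conv _ _ (hFm k) (hFm (m-k))]
    · intro k _
      exact measurable_const.mul ((hmeasp k).lintegral_prod_right')
  have hsum : ∑ k ∈ range (m+1), ((m.choose k : ℕ) : ℝ≥0∞) * ((∫⁻ ξ, F k ξ) * (∫⁻ ξ, F (m-k) ξ))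
      ≤ ENNReal.ofReal (∑ k ∈ range (m+1), ((m.choose k : ℕ) : ℝ)
          * ((a * b^k * c k * I) * (a * b^(m-k) * c (m-k) * I))) := by
    have habk : ∀ j : ℕ, (0:ℝ) ≤ a * b^j * c j * I := fun j =>
      mul_nonneg (mul_nonneg (mul_nonneg ha.le (pow_nonneg hb.le _)) (hc0 _)) hI0
    have habk' : ∀ j : ℕ, (0:ℝ) ≤ a * b^j * c j := fun j =>
      mul_nonneg (mul_nonneg ha.le (pow_nonneg hb.le _)) (hc0 _)
    rw [ENNReal.ofReal_sum_of_nonneg (fun k _ =>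
      mul_nonneg (Nat.cast_nonneg _) (mul_nonneg (habk _) (habk _)))]
    refine Finset.sum_le_sum (fun k hk => ?_)
    have hk1 : k ≤ m := Nat.lt_succ_iff.mp (Finset.mem_range.mp hk)
    have hk2 : m - k ≤ m := Nat.sub_le _ _
    calc ((m.choose k : ℕ) : ℝ≥0∞) * ((∫⁻ ξ, F k ξ) * (∫⁻ ξ, F (m-k) ξ))
        ≤ ((m.choose k : ℕ) : ℝ≥0∞) * ((ENNReal.ofReal (a * b^k * c k) * ENNReal.ofReal I)
            * (ENNReal.ofReal (a * b^(m-k) * c (m-k)) * ENNReal.ofReal I)) :=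
          mul_le_mul_right (mul_le_mul' (hL k hk1) (hL (m-k) hk2)) _
      _ = ENNReal.ofReal (((m.choose k : ℕ) : ℝ) * ((a * b^k * c k * I) * (a * b^(m-k) * c (m-k) * I))) := by
          rw [← ENNReal.ofReal_mul (habk' k), ← ENNReal.ofReal_mul (habk' (m-k)),
            ← ENNReal.ofReal_mul (habk k),
            ← ENNReal.ofReal_natCast (m.choose k),
            ← ENNReal.ofReal_mul (Nat.cast_nonneg _)]
  -- final arithmetic
  have hfinal : α * ∑ k ∈ range (m+1), ((m.choose k : ℕ) : ℝ)
      * ((a * b^k * c k * I) * (a * b^(m-k) * c (m-k) * I))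
      = 2 * α * a^2 * b^m * I^2 * (2*(m:ℝ)+2) ^ ((m:ℝ)-1) := by
    have hterm : ∀ k ∈ range (m+1), ((m.choose k : ℕ) : ℝ)
        * ((a * b^k * c k * I) * (a * b^(m-k) * c (m-k) * I))
        = (a^2 * b^m * I^2) * (((m.choose k : ℕ) : ℝ) * c k * c (m-k)) := by
      intro k hk
      have hk1 : k ≤ m := Nat.lt_succ_iff.mp (Finset.mem_range.mp hk)
      have hpow : b^k * b^(m-k) = b^m := by rw [← pow_add, Nat.add_sub_cancel' hk1]
      rw [← hpow]; ring
    rw [Finset.sum_congr rfl hterm, ← Finset.mul_sum, key_sum m]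
    ring
  calc eLpNorm (fun ξ : E3 => ‖ξ‖^(m+2) * W ξ) 1 (volume : Measure E3)
      = ∫⁻ ξ, ENNReal.ofReal (‖ξ‖^(m+2) * W ξ) := hchain1
    _ ≤ ∫⁻ ξ, ENNReal.ofReal α * ENNReal.ofReal (‖ξ‖^m * conv f f ξ) := hchain2
    _ = ENNReal.ofReal α * ∫⁻ ξ, ENNReal.ofReal (‖ξ‖^m * conv f f ξ) :=
        lintegral_const_mul' _ _ ENNReal.ofReal_ne_top
    _ ≤ ENNReal.ofReal α * ∫⁻ ξ, ∫⁻ η, ENNReal.ofReal (‖ξ‖^m * (fm (ξ - η) * fm η)) :=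
        mul_le_mul_right (lintegral_mono hchain3) _
    _ ≤ ENNReal.ofReal α * ∫⁻ ξ, ∫⁻ η, ∑ k ∈ range (m+1), ((m.choose k : ℕ) : ℝ≥0∞) * (F k (ξ - η) * F (m-k) η) :=
        mul_le_mul_right (lintegral_mono (fun ξ => lintegral_mono (fun η => hchain4 ξ η))) _
    _ = ENNReal.ofReal α * ∑ k ∈ range (m+1), ((m.choose k : ℕ) : ℝ≥0∞) * ((∫⁻ ξ, F k ξ) * (∫⁻ ξ, F (m-k) ξ)) := by
        rw [hswap]
    _ ≤ ENNReal.ofReal α * ENNReal.ofReal (∑ k ∈ range (m+1), ((m.choose k : ℕ) : ℝ)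
          * ((a * b^k * c k * I) * (a * b^(m-k) * c (m-k) * I))) :=
        mul_le_mul_right hsum _
    _ = ENNReal.ofReal (α * ∑ k ∈ range (m+1), ((m.choose k : ℕ) : ℝ)
          * ((a * b^k * c k * I) * (a * b^(m-k) * c (m-k) * I))) :=
        (ENNReal.ofReal_mul hα.le).symm
    _ = ENNReal.ofReal (2 * α * a^2 * b^m * I^2 * (2*(m:ℝ)+2) ^ ((m:ℝ)-1)) := by rw [hfinal]
end
end
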